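/- arXiv:math/0405181 — 4 statements merged into one kernel-verified Lean document; each statement's English description precedes it below -/
import Mathlib

section
/- Let G be a finite positive bipartite graph with at least one edge. Then there is a polynomial p such that H_G(r) = p(r) for all nonnegative integers r. -/
open Finset

variable {V : Type*} [Fintype V] [DecidableEq V]

/-- A magic labeling of the finite graph with vertex set `V` and edge set `E`,
of magic sum `r`: for each vertex `v` the sum of the labels of all edges
incident to `v` equals `r`. -/
def IsMagic (E : Finset (Sym2 V)) (L : Sym2 V → ℕ) (r : ℕ) : Prop :=
  (∀ e, e ∉ E → L e = 0) ∧ ∀ v : V, ∑ e ∈ E with v ∈ e, L e = r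

/-- `HG E r` is the number of magic labelings of magic sum `r`. -/
noncomputable def HG (E : Finset (Sym2 V)) (r : ℕ) : ℕ :=
  Nat.card {L : Sym2 V → ℕ // IsMagic E L r}

/-- A positive graph: for every edge `e` there is a magic labeling `L` with `L e > 0`. -/
def IsPositive (E : Finset (Sym2 V)) : Prop :=
  ∀ e ∈ E, ∃ (L : Sym2 V → ℕ) (r : ℕ), IsMagic E L r ∧ 0 < L e

open Polynomial

set_option linter.unusedSectionVars false
set_option maxHeartbeats 1000000

noncomputable def sumPowPoly (p : ℕ) : Polynomial ℚ :=
  ∑ i ∈ range (p + 1), C (_root_.bernoulli i * ((p + 1).choose i) / (p + 1)) * X ^ (p + 1 - i)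

lemma sumPowPoly_eval (p n : ℕ) :
    (sumPowPoly p).eval (n : ℚ) = ∑ k ∈ range n, (k : ℚ) ^ p := by
  rw [sum_range_pow n p, sumPowPoly]
  rw [eval_finset_sum]
  refine Finset.sum_congr rfl fun i _ => ?_
  rw [eval_mul, eval_C, eval_pow, eval_X]
  ring

lemma exists_antideriv (P : Polynomial ℚ) :
    ∃ Φ : Polynomial ℚ, ∀ n : ℕ, Φ.eval (n : ℚ) = ∑ s ∈ Icc 1 n, P.eval (s : ℚ) := by
  refine ⟨∑ k ∈ range (P.natDegree + 1),
      C (P.coeff k) * ((sumPowPoly k).comp (X + 1) - C ((0:ℚ) ^ k)), fun n => ?_⟩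
  have key : ∀ s : ℕ, P.eval (s:ℚ) = ∑ k ∈ range (P.natDegree + 1), P.coeff k * (s:ℚ)^k := by
    intro s; exact P.eval_eq_sum_range _
  calc (∑ k ∈ range (P.natDegree + 1),
      C (P.coeff k) * ((sumPowPoly k).comp (X + 1) - C ((0:ℚ) ^ k))).eval (n:ℚ)
      = ∑ k ∈ range (P.natDegree + 1), P.coeff k * ((sumPowPoly k).eval ((n:ℚ)+1) - 0 ^ k) := by
        rw [eval_finset_sum]; exact Finset.sum_congr rfl fun k _ => by simp
    _ = ∑ k ∈ range (P.natDegree + 1), P.coeff k * (∑ s ∈ Icc 1 n, (s:ℚ) ^ k) := by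
        refine Finset.sum_congr rfl fun k _ => ?_
        congr 1
        have : ((n:ℚ) + 1) = ((n+1 : ℕ) : ℚ) := by push_cast; ring
        rw [this, sumPowPoly_eval k (n+1)]
        have : range (n+1) = insert 0 (Icc 1 n) := by
          ext x; simp [Nat.lt_succ_iff, Nat.one_le_iff_ne_zero]; omega
        rw [this, Finset.sum_insert (by simp)]
        push_cast; ring
    _ = ∑ s ∈ Icc 1 n, P.eval (s:ℚ) := by
        simp_rw [Finset.mul_sum]
        rw [Finset.sum_comm]
        exact Finset.sum_congr rfl fun s _ => (key s).symm
instance (E : Finset (Sym2 V)) (L : Sym2 V → ℕ) (r : ℕ) : Decidable (IsMagic E L r) := by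
  unfold IsMagic; infer_instance

def magicFinset (E : Finset (Sym2 V)) (r : ℕ) : Finset (Sym2 V → ℕ) :=
  (Fintype.piFinset fun _ : Sym2 V => Finset.range (r+1)).filter (fun L => IsMagic E L r)

lemma IsMagic.le {E : Finset (Sym2 V)} {L : Sym2 V → ℕ} {r : ℕ} (h : IsMagic E L r)
    (e : Sym2 V) : L e ≤ r := by
  by_cases he : e ∈ E
  · have hmem : e ∈ E.filter (fun e' => e.out.1 ∈ e') := by
      simp [Finset.mem_filter, he, Sym2.out_fst_mem]
    calc L e ≤ ∑ e' ∈ E with e.out.1 ∈ e', L e' :=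
          Finset.single_le_sum (fun i _ => Nat.zero_le _) hmem
      _ = r := h.2 e.out.1
  · simp [h.1 e he]

lemma mem_magicFinset {E : Finset (Sym2 V)} {L : Sym2 V → ℕ} {r : ℕ} :
    L ∈ magicFinset E r ↔ IsMagic E L r := by
  constructor
  · exact fun h => (Finset.mem_filter.mp h).2
  · intro h
    refine Finset.mem_filter.mpr ⟨?_, h⟩
    refine Fintype.mem_piFinset.mpr fun e => ?_
    simpa [Nat.lt_succ_iff] using h.le e

lemma isMagic_sdiff_iff {E S : Finset (Sym2 V)} (hS : S ⊆ E) {L : Sym2 V → ℕ} {r : ℕ} :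
    IsMagic (E \ S) L r ↔ (IsMagic E L r ∧ ∀ e ∈ S, L e = 0) := by
  have hsum : (∀ e ∈ S, L e = 0) →
      ∀ v : V, ∑ e ∈ (E \ S) with v ∈ e, L e = ∑ e ∈ E with v ∈ e, L e := by
    intro hz v
    refine Finset.sum_subset ?_ ?_
    · exact Finset.filter_subset_filter _ (Finset.sdiff_subset)
    · intro e he hne
      rcases Finset.mem_filter.mp he with ⟨heE, hve⟩
      by_cases heS : e ∈ S
      · exact hz e heS
      · exact absurd (Finset.mem_filter.mpr ⟨Finset.mem_sdiff.mpr ⟨heE, heS⟩, hve⟩) hne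
  constructor
  · intro h
    have hz : ∀ e ∈ S, L e = 0 := fun e he => h.1 e (by simp [he])
    refine ⟨⟨fun e he => h.1 e (by simp [he]), fun v => ?_⟩, hz⟩
    rw [← hsum hz v]; exact h.2 v
  · rintro ⟨h, hz⟩
    refine ⟨fun e he => ?_, fun v => ?_⟩
    · rcases Finset.mem_sdiff.not.mp he with h'
      by_cases heS : e ∈ S
      · exact hz e heS
      · exact h.1 e (by tauto)
    · rw [hsum hz v]; exact h.2 v

lemma magicFilter_sdiff {E S : Finset (Sym2 V)} (hS : S ⊆ E) (r : ℕ) :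
    (magicFinset E r).filter (fun L => ∀ e ∈ S, L e = 0) = magicFinset (E \ S) r := by
  ext L
  rw [Finset.mem_filter, mem_magicFinset, mem_magicFinset, isMagic_sdiff_iff hS]

lemma card_filter_ge {E : Finset (Sym2 V)} {q : Sym2 V → ℕ} (hq : IsMagic E q 1) (r : ℕ) :
    ((magicFinset E (r+1)).filter (fun L => ∀ e, q e ≤ L e)).card
      = (magicFinset E r).card := by
  refine Finset.card_bij' (fun L _ => fun e => L e - q e) (fun L _ => fun e => L e + q e)
    ?_ ?_ ?_ ?_
  · intro L hL
    rcases Finset.mem_filter.mp hL with ⟨hL, hge⟩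
    rcases mem_magicFinset.mp hL with ⟨hz, hs⟩
    refine mem_magicFinset.mpr ⟨fun e he => by simp [hz e he, hq.1 e he], fun v => ?_⟩
    show ∑ e ∈ E with v ∈ e, (L e - q e) = r
    rw [Finset.sum_tsub_distrib _ (fun e _ => hge e), hs v, hq.2 v]
    omega
  · intro L hL
    rcases mem_magicFinset.mp hL with ⟨hz, hs⟩
    refine Finset.mem_filter.mpr ⟨mem_magicFinset.mpr ⟨fun e he => by simp [hz e he, hq.1 e he],
      fun v => ?_⟩, fun e => Nat.le_add_left _ _⟩
    show ∑ e ∈ E with v ∈ e, (L e + q e) = r + 1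
    rw [Finset.sum_add_distrib, hs v, hq.2 v]
  · intro L hL
    rcases Finset.mem_filter.mp hL with ⟨_, hge⟩
    funext e
    show L e - q e + q e = L e
    exact Nat.sub_add_cancel (hge e)
  · intro L hL
    funext e
    show L e + q e - q e = L e
    omega

lemma rec_formula {E : Finset (Sym2 V)} {q : Sym2 V → ℕ} (hq : IsMagic E q 1) (r : ℕ) :
    ((magicFinset E (r+1)).card : ℚ) = (magicFinset E r).card
      + ∑ S ∈ (E.filter (fun e => q e ≠ 0)).powerset.erase ∅,
          (-1)^(S.card+1) * ((magicFinset (E \ S) (r+1)).card : ℚ) := by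
  classical
  set Q := E.filter (fun e => q e ≠ 0) with hQ
  set T := magicFinset E (r+1) with hT
  have hiff : ∀ L : Sym2 V → ℕ, (∀ e, q e ≤ L e) ↔ ∀ e ∈ Q, 1 ≤ L e := by
    intro L
    constructor
    · intro h e he
      rcases Finset.mem_filter.mp he with ⟨_, hne⟩
      have := h e; omega
    · intro h e
      by_cases h0 : q e = 0
      · simp [h0]
      · have heE : e ∈ E := by
          by_contra hc; exact h0 (hq.1 e hc)
        have h1 : q e = 1 := le_antisymm (hq.le e) (by omega)
        rw [h1]; exact h e (Finset.mem_filter.mpr ⟨heE, h0⟩)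
  -- split by whether q ≤ L
  have hsplit : (T.card : ℚ)
      = (T.filter (fun L => ∀ e, q e ≤ L e)).card
        + (T.filter (fun L => ¬ ∀ e, q e ≤ L e)).card := by
    rw [← Nat.cast_add, Finset.card_filter_add_card_filter_not]
  -- inclusion-exclusion for the second part
  have hie : ((T.filter (fun L => ¬ ∀ e, q e ≤ L e)).card : ℚ)
      = ∑ S ∈ Q.powerset.erase ∅,
          (-1)^(S.card+1) * ((magicFinset (E \ S) (r+1)).card : ℚ) := by
    have step1 : ((T.filter (fun L => ¬ ∀ e, q e ≤ L e)).card : ℚ)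
        = ∑ L ∈ T, (1 - ∏ e ∈ Q, (if L e = 0 then 0 else (1:ℚ))) := by
      rw [Finset.card_filter]
      push_cast
      refine Finset.sum_congr rfl fun L hL => ?_
      by_cases h : ∀ e ∈ Q, 1 ≤ L e
      · have : ∏ e ∈ Q, (if L e = 0 then 0 else (1:ℚ)) = 1 := by
          refine Finset.prod_eq_one fun e he => ?_
          have h1 : L e ≠ 0 := by have := h e he; omega
          simp [h1]
        rw [this]
        simp [(hiff L).mpr h]
      · push_neg at h
        rcases h with ⟨e, he, hle⟩
        have hLe : L e = 0 := by omega
        have : ∏ e ∈ Q, (if L e = 0 then 0 else (1:ℚ)) = 0 :=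
          Finset.prod_eq_zero he (by simp [hLe])
        rw [this]
        have : ¬ ∀ e, q e ≤ L e := fun hc => by
          have := (hiff L).mp hc e he; omega
        simp [this]
    have expand : ∀ L : Sym2 V → ℕ, ∏ e ∈ Q, (if L e = 0 then 0 else (1:ℚ))
        = ∑ S ∈ Q.powerset, (-1)^S.card * ∏ e ∈ S, (if L e = 0 then (1:ℚ) else 0) := by
      intro L
      have : ∀ e, (if L e = 0 then (0:ℚ) else 1)
          = (-(if L e = 0 then (1:ℚ) else 0)) + 1 := by
        intro e; by_cases h : L e = 0 <;> simp [h]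
      simp_rw [this]
      rw [Finset.prod_add]
      refine Finset.sum_congr rfl fun S hS => ?_
      rw [Finset.prod_const_one, mul_one]
      have : ∀ i ∈ S, (-(if L i = 0 then (1:ℚ) else 0)) = (-1) * (if L i = 0 then (1:ℚ) else 0) :=
        fun i _ => by ring
      rw [Finset.prod_congr rfl this, Finset.prod_mul_distrib, Finset.prod_const]
    rw [step1]
    simp_rw [expand]
    rw [Finset.sum_sub_distrib, Finset.sum_const, nsmul_eq_mul, mul_one, Finset.sum_comm]
    have inner : ∀ S ∈ Q.powerset,
        ∑ L ∈ T, (-1:ℚ)^S.card * ∏ e ∈ S, (if L e = 0 then (1:ℚ) else 0)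
        = (-1)^S.card * ((magicFinset (E \ S) (r+1)).card : ℚ) := by
      intro S hS
      have hSE : S ⊆ E := (Finset.mem_powerset.mp hS).trans (Finset.filter_subset _ _)
      rw [← Finset.mul_sum]
      congr 1
      have key : ∑ L ∈ T, (∏ e ∈ S, if L e = 0 then (1:ℚ) else 0)
          = ((T.filter (fun L => ∀ e ∈ S, L e = 0)).card : ℚ) := by
        rw [Finset.card_filter]
        push_cast
        refine Finset.sum_congr rfl fun L _ => ?_
        by_cases h : ∀ e ∈ S, L e = 0
        · rw [Finset.prod_eq_one (fun e he => by simp [h e he]), if_pos h]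
        · have h' := h
          push_neg at h'
          rcases h' with ⟨e, he, hne⟩
          rw [Finset.prod_eq_zero he (by simp [hne]), if_neg h]
      rw [key]
      exact_mod_cast congrArg (fun (s : Finset (Sym2 V → ℕ)) => (s.card : ℚ))
        (magicFilter_sdiff hSE (r+1))
    rw [Finset.sum_congr rfl inner]
    have hins : Q.powerset = insert ∅ (Q.powerset.erase ∅) := by
      rw [Finset.insert_erase (Finset.empty_mem_powerset Q)]
    conv_lhs => rw [hins]
    rw [Finset.sum_insert (Finset.notMem_erase _ _)]
    simp only [Finset.card_empty, pow_zero, one_mul, Finset.sdiff_empty, ← hT]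
    have flip : ∀ S ∈ Q.powerset.erase ∅,
        (-1:ℚ)^(S.card+1) * ((magicFinset (E \ S) (r+1)).card : ℚ)
        = -((-1)^(S.card) * ((magicFinset (E \ S) (r+1)).card : ℚ)) := by
      intro S _; ring
    rw [Finset.sum_congr rfl flip, Finset.sum_neg_distrib]
    ring
  rw [hsplit, hie, card_filter_ge hq r]

lemma exists_pm {E : Finset (Sym2 V)} {c : V → Bool}
    (hc : ∀ u v : V, s(u, v) ∈ E → c u ≠ c v)
    {L : Sym2 V → ℕ} {r : ℕ} (hr : 1 ≤ r) (hL : IsMagic E L r) :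
    ∃ q : Sym2 V → ℕ, IsMagic E q 1 := by
  classical
  set X : Finset V := univ.filter (fun v => c v = true) with hX
  set Y : Finset V := univ.filter (fun v => c v = false) with hY
  -- double counting
  have count : ∀ A : Finset V, A.card * r = ∑ e ∈ E, (A.filter (· ∈ e)).card * L e := by
    intro A
    calc A.card * r = ∑ _v ∈ A, r := by rw [Finset.sum_const, smul_eq_mul]
      _ = ∑ v ∈ A, ∑ e ∈ E with v ∈ e, L e :=
          Finset.sum_congr rfl fun v _ => (hL.2 v).symm
      _ = ∑ v ∈ A, ∑ e ∈ E, if v ∈ e then L e else 0 := by simp_rw [Finset.sum_filter]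
      _ = ∑ e ∈ E, ∑ v ∈ A, if v ∈ e then L e else 0 := Finset.sum_comm
      _ = ∑ e ∈ E, (A.filter (· ∈ e)).card * L e := by
          refine Finset.sum_congr rfl fun e _ => ?_
          rw [← Finset.sum_filter, Finset.sum_const, smul_eq_mul]
  -- each edge has exactly one endpoint of each color
  have endpoints : ∀ e ∈ E, ∃ a b : V, e = s(a, b) ∧ c a = true ∧ c b = false := by
    intro e he
    induction e with
    | _ a b =>
      have hab := hc a b he
      cases ha : c a
      · cases hb : c b
        · rw [ha, hb] at hab; exact absurd rfl hab
        · exact ⟨b, a, Sym2.eq_swap, hb, ha⟩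
      · cases hb : c b
        · exact ⟨a, b, rfl, ha, hb⟩
        · rw [ha, hb] at hab; exact absurd rfl hab
  have cardX : ∀ e ∈ E, (X.filter (· ∈ e)).card = 1 := by
    intro e he
    obtain ⟨a, b, rfl, ha, hb⟩ := endpoints e he
    have : X.filter (· ∈ s(a, b)) = {a} := by
      ext v
      simp only [hX, Finset.mem_filter, Finset.mem_univ, true_and, Sym2.mem_iff,
        Finset.mem_singleton]
      constructor
      · rintro ⟨hv, rfl | rfl⟩
        · rfl
        · rw [hv] at hb; exact absurd hb (by simp)
      · rintro rfl; exact ⟨ha, Or.inl rfl⟩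
    rw [this, Finset.card_singleton]
  have cardY : ∀ e ∈ E, (Y.filter (· ∈ e)).card = 1 := by
    intro e he
    obtain ⟨a, b, rfl, ha, hb⟩ := endpoints e he
    have : Y.filter (· ∈ s(a, b)) = {b} := by
      ext v
      simp only [hY, Finset.mem_filter, Finset.mem_univ, true_and, Sym2.mem_iff,
        Finset.mem_singleton]
      constructor
      · rintro ⟨hv, rfl | rfl⟩
        · rw [hv] at ha; exact absurd ha (by simp)
        · rfl
      · rintro rfl; exact ⟨hb, Or.inr rfl⟩
    rw [this, Finset.card_singleton]
  have cardXY : X.card = Y.card := by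
    have hx := count X
    have hy := count Y
    rw [Finset.sum_congr rfl (fun e he => by rw [cardX e he])] at hx
    rw [Finset.sum_congr rfl (fun e he => by rw [cardY e he])] at hy
    exact Nat.eq_of_mul_eq_mul_right hr (hx.trans hy.symm)
  -- Hall's theorem setup
  let ι := {v : V // c v = true}
  let t : ι → Finset V := fun x =>
    univ.filter (fun w => c w = false ∧ s(x.1, w) ∈ E ∧ 1 ≤ L s(x.1, w))
  have hall : ∀ s : Finset ι, s.card ≤ (s.biUnion t).card := by
    intro s
    set A : Finset V := s.image Subtype.val with hA
    set N : Finset V := s.biUnion t with hN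
    have hAcard : A.card = s.card := Finset.card_image_of_injective _ Subtype.val_injective
    have hedge : ∀ e ∈ E, (A.filter (· ∈ e)).card * L e ≤ (N.filter (· ∈ e)).card * L e := by
      intro e he
      rcases Nat.eq_zero_or_pos (L e) with h0 | h1
      · simp [h0]
      refine Nat.mul_le_mul_right _ ?_
      obtain ⟨a, b, rfl, ha, hb⟩ := endpoints e he
      have hAsub : A.filter (· ∈ s(a, b)) ⊆ {a} := by
        intro v hv
        rcases Finset.mem_filter.mp hv with ⟨hvA, hve⟩
        have hvc : c v = true := by
          rcases Finset.mem_image.mp hvA with ⟨x, _, rfl⟩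
          exact x.2
        rcases Sym2.mem_iff.mp hve with rfl | rfl
        · exact Finset.mem_singleton_self _
        · rw [hvc] at hb; exact absurd hb (by simp)
      rcases Finset.eq_empty_or_nonempty (A.filter (· ∈ s(a, b))) with hemp | ⟨v, hv⟩
      · rw [hemp]; simp
      · have hva : v = a := Finset.mem_singleton.mp (hAsub hv)
        subst hva
        have hvA : v ∈ A := (Finset.mem_filter.mp hv).1
        rcases Finset.mem_image.mp hvA with ⟨x, hxs, hxv⟩
        have hbN : b ∈ N.filter (· ∈ s(v, b)) := by
          refine Finset.mem_filter.mpr ⟨?_, Sym2.mem_mk_right _ _⟩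
          refine Finset.mem_biUnion.mpr ⟨x, hxs, ?_⟩
          refine Finset.mem_filter.mpr ⟨Finset.mem_univ _, hb, ?_, ?_⟩ <;> rw [hxv]
          · exact he
          · exact h1
        calc (A.filter (· ∈ s(v, b))).card ≤ 1 := by
              simpa using Finset.card_le_card hAsub
          _ ≤ (N.filter (· ∈ s(v, b))).card := Finset.card_pos.mpr ⟨b, hbN⟩
    have hchain : A.card * r ≤ N.card * r := by
      rw [count A, count N]
      exact Finset.sum_le_sum hedge
    rw [hAcard] at hchain
    exact Nat.le_of_mul_le_mul_right hchain hr
  obtain ⟨f, hinj, hmem⟩ := (Finset.all_card_le_biUnion_card_iff_exists_injective t).mp hall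
  have hfY : ∀ x : ι, f x ∈ Y ∧ s(x.1, f x) ∈ E ∧ 1 ≤ L s(x.1, f x) := by
    intro x
    rcases Finset.mem_filter.mp (hmem x) with ⟨_, h1, h2, h3⟩
    exact ⟨Finset.mem_filter.mpr ⟨Finset.mem_univ _, h1⟩, h2, h3⟩
  have himg : (univ : Finset ι).image (fun x => f x) = Y := by
    refine Finset.eq_of_subset_of_card_le (fun y hy => ?_) ?_
    · rcases Finset.mem_image.mp hy with ⟨x, _, rfl⟩
      exact (hfY x).1
    · rw [Finset.card_image_of_injective _ hinj, Finset.card_univ, Fintype.card_subtype]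
      rw [← hX, ← cardXY]
  -- the matching
  set Medges : Finset (Sym2 V) := (univ : Finset ι).image (fun x => s(x.1, f x)) with hM
  have hMsubE : ∀ e ∈ Medges, e ∈ E := by
    intro e he
    rcases Finset.mem_image.mp he with ⟨x, _, rfl⟩
    exact (hfY x).2.1
  refine ⟨fun e => if e ∈ Medges then 1 else 0, fun e he => by
    simp only [ite_eq_right_iff]
    exact fun hm => absurd (hMsubE e hm) he, ?_⟩
  intro v
  have hsum : ∑ e ∈ E with v ∈ e, (if e ∈ Medges then 1 else 0)
      = ((E.filter (v ∈ ·)).filter (· ∈ Medges)).card :=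
    (Finset.card_filter _ _).symm
  rw [hsum]
  have hcf : ∀ x : ι, c (f x) = false := fun x => (Finset.mem_filter.mp (hfY x).1).2
  cases hv : c v with
  | true =>
    have : (E.filter (v ∈ ·)).filter (· ∈ Medges) = {s(v, f ⟨v, hv⟩)} := by
      ext e
      simp only [Finset.mem_filter, Finset.mem_singleton]
      constructor
      · rintro ⟨⟨heE, hve⟩, heM⟩
        rcases Finset.mem_image.mp heM with ⟨x, _, rfl⟩
        rcases Sym2.mem_iff.mp hve with h | h
        · have : x = ⟨v, hv⟩ := Subtype.ext h.symm
          rw [this]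
        · exfalso
          rw [h, hcf x] at hv
          exact Bool.false_ne_true hv
      · rintro rfl
        have hm : s(v, f ⟨v, hv⟩) ∈ Medges :=
          Finset.mem_image.mpr ⟨⟨v, hv⟩, Finset.mem_univ _, rfl⟩
        exact ⟨⟨(hfY ⟨v, hv⟩).2.1, Sym2.mem_mk_left _ _⟩, hm⟩
    rw [this, Finset.card_singleton]
  | false =>
    have hvY : v ∈ Y := Finset.mem_filter.mpr ⟨Finset.mem_univ _, hv⟩
    rw [← himg] at hvY
    rcases Finset.mem_image.mp hvY with ⟨x₀, _, hx₀⟩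
    have : (E.filter (v ∈ ·)).filter (· ∈ Medges) = {s(x₀.1, v)} := by
      ext e
      simp only [Finset.mem_filter, Finset.mem_singleton]
      constructor
      · rintro ⟨⟨heE, hve⟩, heM⟩
        rcases Finset.mem_image.mp heM with ⟨x, _, rfl⟩
        rcases Sym2.mem_iff.mp hve with h | h
        · exfalso
          have := x.2
          rw [← h, hv] at this
          exact Bool.false_ne_true this
        · have hxx : x = x₀ := hinj (by rw [← h, hx₀])
          rw [hxx, hx₀]
      · rintro rfl
        have hm : s(x₀.1, v) ∈ Medges := by
          refine Finset.mem_image.mpr ⟨x₀, Finset.mem_univ _, ?_⟩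
          rw [hx₀]
        have heE : s(x₀.1, v) ∈ E := by
          have := (hfY x₀).2.1
          rwa [hx₀] at this
        exact ⟨⟨heE, Sym2.mem_mk_right _ _⟩, hm⟩
    rw [this, Finset.card_singleton]

lemma HG_eq_card (E : Finset (Sym2 V)) (r : ℕ) : HG E r = (magicFinset E r).card := by
  rw [HG]
  rw [Nat.card_congr (Equiv.subtypeEquivRight (fun L => mem_magicFinset.symm))]
  simp [Nat.card_eq_fintype_card]

lemma magicFinset_zero (E : Finset (Sym2 V)) : magicFinset E 0 = {fun _ => 0} := by
  ext L
  simp only [mem_magicFinset, Finset.mem_singleton]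
  constructor
  · intro h
    funext e
    simpa using h.le e
  · rintro rfl
    exact ⟨fun _ _ => rfl, fun v => Finset.sum_const_zero⟩

lemma key_induction (c : V → Bool) : ∀ (E : Finset (Sym2 V)),
    (∀ u v : V, s(u, v) ∈ E → c u ≠ c v) →
    ∃ p : Polynomial ℚ,
      (∀ r : ℕ, 1 ≤ r → ((magicFinset E r).card : ℚ) = p.eval (r : ℚ))
      ∧ ((∃ q : Sym2 V → ℕ, IsMagic E q 1) → p.eval 0 = 1) := by
  intro E
  induction E using Finset.strongInduction with
  | _ E ih =>
    intro hc
    by_cases hpm : ∃ q : Sym2 V → ℕ, IsMagic E q 1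
    · obtain ⟨q, hq⟩ := hpm
      have IH : ∀ S ∈ (E.filter (fun e => q e ≠ 0)).powerset.erase ∅, ∃ p : Polynomial ℚ,
          (∀ r : ℕ, 1 ≤ r → ((magicFinset (E \ S) r).card : ℚ) = p.eval (r : ℚ)) := by
        intro S hS
        rcases Finset.mem_erase.mp hS with ⟨hSne, hSp⟩
        have hSsub : S ⊆ E := (Finset.mem_powerset.mp hSp).trans (Finset.filter_subset _ _)
        have hss : E \ S ⊂ E := by
          obtain ⟨x, hx⟩ := Finset.nonempty_iff_ne_empty.mpr hSne
          exact (Finset.ssubset_iff_of_subset Finset.sdiff_subset).mpr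
            ⟨x, hSsub hx, by simp [hx]⟩
        obtain ⟨p, hp, _⟩ := ih (E \ S) hss (fun u v huv => hc u v (Finset.sdiff_subset huv))
        exact ⟨p, hp⟩
      choose ps hps using IH
      obtain ⟨Φ, hΦ⟩ := exists_antideriv (∑ S ∈ ((E.filter (fun e => q e ≠ 0)).powerset.erase ∅).attach,
        Polynomial.C ((-1:ℚ)^(S.1.card+1)) * ps S.1 S.2)
      set P : Polynomial ℚ := ∑ S ∈ ((E.filter (fun e => q e ≠ 0)).powerset.erase ∅).attach,
        Polynomial.C ((-1:ℚ)^(S.1.card+1)) * ps S.1 S.2 with hPdef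
      have heval : ∀ r : ℕ, 1 ≤ r → P.eval (r:ℚ)
          = ∑ S ∈ (E.filter (fun e => q e ≠ 0)).powerset.erase ∅,
              (-1:ℚ)^(S.card+1) * ((magicFinset (E \ S) r).card : ℚ) := by
        intro r hr
        rw [hPdef, eval_finset_sum]
        rw [← Finset.sum_attach ((E.filter (fun e => q e ≠ 0)).powerset.erase ∅)
          (fun S => (-1:ℚ)^(S.card+1) * ((magicFinset (E \ S) r).card : ℚ))]
        refine Finset.sum_congr rfl fun S _ => ?_
        rw [eval_mul, eval_C, hps S.1 S.2 r hr]
      have hrec : ∀ r : ℕ, ((magicFinset E (r+1)).card : ℚ)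
          = ((magicFinset E r).card : ℚ) + P.eval (((r+1 : ℕ)):ℚ) := by
        intro r
        rw [rec_formula hq r, heval (r+1) (by omega)]
      refine ⟨Polynomial.C 1 + Φ, ?_, ?_⟩
      · intro r
        induction r with
        | zero => intro h; omega
        | succ n ihn =>
          intro _
          rcases Nat.eq_zero_or_pos n with rfl | hn
          · rw [hrec 0]
            rw [magicFinset_zero, Finset.card_singleton]
            rw [eval_add, eval_C, hΦ (0+1)]
            norm_num
          · rw [hrec n, ihn hn, eval_add, eval_add, eval_C, eval_C,
              hΦ (n+1), hΦ n, Finset.sum_Icc_succ_top (by omega : 1 ≤ n + 1)]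
            push_cast
            ring
      · intro _
        rw [eval_add, eval_C]
        have h0 := hΦ 0
        norm_num at h0
        rw [h0]
        norm_num
    · refine ⟨0, fun r hr => ?_, fun h => absurd h hpm⟩
      simp only [Polynomial.eval_zero]
      norm_cast
      rw [Finset.card_eq_zero]
      by_contra hne
      rw [← Ne, ← Finset.nonempty_iff_ne_empty] at hne
      obtain ⟨L, hL⟩ := hne
      exact hpm (exists_pm hc hr (mem_magicFinset.mp hL))

/-- Let `G` be a finite positive bipartite graph with at least one edge.  Then
there is a polynomial `p` with `H_G(r) = p(r)` for all nonnegative integers `r`. -/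
theorem bipartite_magic_polynomial (E : Finset (Sym2 V))
    (hbip : ∃ c : V → Bool, ∀ u v : V, s(u, v) ∈ E → c u ≠ c v)
    (hpos : IsPositive E) (hne : E.Nonempty) :
    ∃ p : Polynomial ℚ, ∀ r : ℕ, (HG E r : ℚ) = p.eval (r : ℚ) := by
  obtain ⟨c, hc⟩ := hbip
  obtain ⟨e₀, he₀⟩ := hne
  obtain ⟨L, r₀, hL, hL0⟩ := hpos e₀ he₀
  have hr₀ : 1 ≤ r₀ := by have := hL.le e₀; omega
  have hpm : ∃ q : Sym2 V → ℕ, IsMagic E q 1 := exists_pm hc hr₀ hL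
  obtain ⟨p, hp, h0⟩ := key_induction c E hc
  refine ⟨p, fun r => ?_⟩
  rw [HG_eq_card]
  rcases Nat.eq_zero_or_pos r with rfl | hr
  · rw [magicFinset_zero, Finset.card_singleton, Nat.cast_one, Nat.cast_zero, h0 hpm]
  · exact hp r hr
end

section
/- Let G be a finite positive graph with at least one edge. Then the polytope P_G of magic labelings of G is a rational polytope of dimension q - n + b, where q is the number of edges of G, n is the number of vertices, and b is the number of connected components of G that are bipartite. -/
open Finset

variable {V : Type*} [Fintype V] [DecidableEq V]

/-- The polytope `P_G` of magic labelings of the graph with edge set `E`: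
assignments of nonnegative reals to the edges such that at every vertex the
labels of the incident edges (loops counted once) sum to `1`. -/
def PG (E : Finset (Sym2 V)) : Set (Sym2 V → ℝ) :=
  {x | (∀ e, e ∉ E → x e = 0) ∧ (∀ e, 0 ≤ x e) ∧ ∀ v : V, ∑ e ∈ E with v ∈ e, x e = 1}

/-- The simple graph used to define connected components. -/
def compGraph (E : Finset (Sym2 V)) : SimpleGraph V :=
  SimpleGraph.fromRel (fun u v => s(u, v) ∈ E)

/-- The number of bipartite connected components of the graph with edge set `E`. -/
noncomputable def numBipComp (E : Finset (Sym2 V)) : ℕ :=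
  Nat.card {C : (compGraph E).ConnectedComponent //
    ∃ c : V → Bool, ∀ u v : V, s(u, v) ∈ E →
      (compGraph E).connectedComponentMk u = C → c u ≠ c v}


def BipProp (E : Finset (Sym2 V)) (C : (compGraph E).ConnectedComponent) : Prop :=
  ∃ c : V → Bool, ∀ u v : V, s(u, v) ∈ E →
    (compGraph E).connectedComponentMk u = C → c u ≠ c v

omit [Fintype V] [DecidableEq V] in
lemma compGraph_adj {E : Finset (Sym2 V)} {a b : V} :
    (compGraph E).Adj a b ↔ a ≠ b ∧ s(a, b) ∈ E := by
  rw [compGraph, SimpleGraph.fromRel_adj]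
  constructor
  · rintro ⟨h, h' | h'⟩
    · exact ⟨h, h'⟩
    · exact ⟨h, Sym2.eq_swap ▸ h'⟩
  · rintro ⟨h, h'⟩; exact ⟨h, Or.inl h'⟩

section ykernel

variable {E : Finset (Sym2 V)} {y : V → ℝ}

omit [Fintype V] [DecidableEq V] in
lemma yker_walk_sign (hy2 : ∀ u v : V, u ≠ v → s(u, v) ∈ E → y u + y v = 0)
    {u v : V} (p : (compGraph E).Walk u v) :
    y v = y u ∨ y v = -y u := by
  induction p with
  | nil => exact Or.inl rfl
  | @cons a b w h p ih =>
    obtain ⟨hne, he⟩ := compGraph_adj.1 h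
    have hab : y a + y b = 0 := hy2 a b hne he
    rcases ih with h' | h'
    · right; rw [h']; linarith
    · left; rw [h']; linarith

omit [Fintype V] [DecidableEq V] in
lemma yker_walk_color (hy2 : ∀ u v : V, u ≠ v → s(u, v) ∈ E → y u + y v = 0)
    {C : (compGraph E).ConnectedComponent} {c : V → Bool}
    (hc : ∀ u v : V, s(u, v) ∈ E →
      (compGraph E).connectedComponentMk u = C → c u ≠ c v)
    {u v : V} (p : (compGraph E).Walk u v)
    (hu : (compGraph E).connectedComponentMk u = C) :
    y v = (if c v = c u then y u else -y u) := by
  induction p with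
  | nil => simp
  | @cons a b w h p ih =>
    obtain ⟨hne, he⟩ := compGraph_adj.1 h
    have hab : y a + y b = 0 := hy2 a b hne he
    have hb : (compGraph E).connectedComponentMk b = C := by
      rw [← hu]; exact (SimpleGraph.ConnectedComponent.sound h.reachable).symm
    have hcab : c a ≠ c b := hc a b he hu
    rcases Bool.eq_false_or_eq_true (c a) with ha' | ha' <;>
      rcases Bool.eq_false_or_eq_true (c b) with hb' | hb' <;>
      rcases Bool.eq_false_or_eq_true (c w) with hw' | hw' <;>
      rw [ih hb] <;> simp [ha', hb', hw'] at hcab ⊢ <;> linarith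

omit [Fintype V] [DecidableEq V] in
lemma yker_zero_of_not_bip (hy1 : ∀ v : V, s(v, v) ∈ E → y v = 0)
    (hy2 : ∀ u v : V, u ≠ v → s(u, v) ∈ E → y u + y v = 0) {v : V}
    (h : ¬ BipProp E ((compGraph E).connectedComponentMk v)) : y v = 0 := by
  by_contra hv
  apply h
  refine ⟨fun w => decide (y w = y v), ?_⟩
  intro a b hab hcomp
  have hreach : (compGraph E).Reachable a v :=
    SimpleGraph.ConnectedComponent.exact hcomp
  have hav : y v = y a ∨ y v = -y a := yker_walk_sign hy2 hreach.some
  have ha0 : y a ≠ 0 := by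
    intro h0; rw [h0] at hav; simp at hav; exact hv hav
  by_cases heq : a = b
  · subst heq; exact absurd (hy1 a hab) ha0
  · have hsum : y a + y b = 0 := hy2 a b heq hab
    have hvne : (y v : ℝ) ≠ 0 := hv
    simp only [ne_eq, decide_eq_decide]
    rcases hav with h' | h'
    · -- y a = y v, y b = -y v
      have hb' : y b = -y v := by linarith
      intro hiff
      have : y b = y v := hiff.1 h'.symm
      rw [hb'] at this; exact hvne (by linarith)
    · -- y a = -y v
      have ha' : y a = -y v := by linarith
      have hb' : y b = y v := by linarith
      intro hiff
      have : y a = y v := hiff.2 hb'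
      rw [ha'] at this; exact hvne (by linarith)

end ykernel

section equivpart

variable (E : Finset (Sym2 V))

omit [Fintype V] in
lemma filt_loop [Fintype V] (v : V) : univ.filter (· ∈ s(v,v)) = ({v} : Finset V) := by
  ext w; simp [Sym2.mem_iff]

omit [Fintype V] in
lemma filt_pair [Fintype V] {u v : V} (h : u ≠ v) :
    univ.filter (· ∈ s(u,v)) = ({u, v} : Finset V) := by
  ext w; simp [Sym2.mem_iff]

/-- The left kernel: functions on vertices summing to zero over each edge. -/
def Yker : Submodule ℝ (V → ℝ) where
  carrier := {y | ∀ e ∈ E, ∑ v ∈ univ with v ∈ e, y v = 0}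
  add_mem' := by
    intro a b ha hb e he
    simp only [Pi.add_apply, Finset.sum_add_distrib, ha e he, hb e he, add_zero]
  zero_mem' := by intro e he; simp
  smul_mem' := by
    intro c a ha e he
    simp only [Pi.smul_apply, smul_eq_mul, ← Finset.mul_sum, ha e he, mul_zero]

variable {E}

lemma Yker_hy1 {y : V → ℝ} (hy : y ∈ Yker E) : ∀ v : V, s(v, v) ∈ E → y v = 0 := by
  intro v hv
  have := hy s(v,v) hv
  rwa [filt_loop, Finset.sum_singleton] at this

lemma Yker_hy2 {y : V → ℝ} (hy : y ∈ Yker E) :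
    ∀ u v : V, u ≠ v → s(u, v) ∈ E → y u + y v = 0 := by
  intro u v huv he
  have := hy s(u,v) he
  rwa [filt_pair huv, Finset.sum_pair huv] at this

open Classical in
noncomputable def col (C : (compGraph E).ConnectedComponent) : V → Bool :=
  if h : BipProp E C then h.choose else fun _ => true

lemma col_spec {C : (compGraph E).ConnectedComponent} (h : BipProp E C) :
    ∀ u v : V, s(u, v) ∈ E → (compGraph E).connectedComponentMk u = C →
      col C u ≠ col C v := by
  rw [col, dif_pos h]
  exact h.choose_spec

omit [DecidableEq V] in
lemma out_mk (C : (compGraph E).ConnectedComponent) :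
    (compGraph E).connectedComponentMk C.out = C := C.out_eq

lemma Yker_val_of_bip {y : V → ℝ} (hy : y ∈ Yker E)
    {C : (compGraph E).ConnectedComponent} (hb : BipProp E C) {v : V}
    (hv : (compGraph E).connectedComponentMk v = C) :
    y v = (if col C v = col C C.out then y C.out else -y C.out) := by
  have hreach : (compGraph E).Reachable C.out v :=
    SimpleGraph.ConnectedComponent.exact ((out_mk C).trans hv.symm)
  exact yker_walk_color (Yker_hy2 hy) (col_spec hb) hreach.some (out_mk C)

open Classical in
noncomputable def bval (t : {C : (compGraph E).ConnectedComponent // BipProp E C} → ℝ)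
    (C : (compGraph E).ConnectedComponent) (w : V) : ℝ :=
  if h : BipProp E C then
    (if col C w = col C C.out then t ⟨C, h⟩ else -t ⟨C, h⟩) else 0

lemma bval_mem (t : {C : (compGraph E).ConnectedComponent // BipProp E C} → ℝ) :
    (fun v => bval t ((compGraph E).connectedComponentMk v) v) ∈ Yker E := by
  intro e he
  induction e using Sym2.inductionOn with
  | hf u v =>
    by_cases huv : u = v
    · subst huv
      rw [filt_loop, Finset.sum_singleton]
      have : ¬ BipProp E ((compGraph E).connectedComponentMk u) := by
        rintro ⟨c, hc⟩
        exact hc u u he rfl rfl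
      simp [bval, dif_neg this]
    · rw [filt_pair huv, Finset.sum_pair huv]
      have hcomp : (compGraph E).connectedComponentMk u =
          (compGraph E).connectedComponentMk v :=
        SimpleGraph.ConnectedComponent.sound (compGraph_adj.2 ⟨huv, he⟩).reachable
      rw [← hcomp]
      by_cases hb : BipProp E ((compGraph E).connectedComponentMk u)
      · have hcne := col_spec hb u v he rfl
        set C := (compGraph E).connectedComponentMk u with hC
        rcases Bool.eq_false_or_eq_true (col C u) with h1 | h1 <;>
          rcases Bool.eq_false_or_eq_true (col C v) with h2 | h2 <;>
          rcases Bool.eq_false_or_eq_true (col C C.out) with h3 | h3 <;>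
          simp [bval, dif_pos hb, h1, h2, h3] at hcne ⊢
      · simp [bval, dif_neg hb]

end equivpart

section equiv2

variable {E : Finset (Sym2 V)}

lemma bval_at_out (t : {C : (compGraph E).ConnectedComponent // BipProp E C} → ℝ)
    (C : {C : (compGraph E).ConnectedComponent // BipProp E C}) :
    bval t ((compGraph E).connectedComponentMk C.1.out) C.1.out = t C := by
  rw [out_mk]
  simp [bval, dif_pos C.2, Subtype.coe_eta]

noncomputable def phi (E : Finset (Sym2 V)) :
    Yker E →ₗ[ℝ] ({C : (compGraph E).ConnectedComponent // BipProp E C} → ℝ) where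
  toFun y C := y.1 C.1.out
  map_add' := fun a b => rfl
  map_smul' := fun c a => rfl

lemma phi_bijective : Function.Bijective (phi E) := by
  constructor
  · rw [← LinearMap.ker_eq_bot, Submodule.eq_bot_iff]
    intro y hy
    ext v
    show y.1 v = 0
    by_cases hb : BipProp E ((compGraph E).connectedComponentMk v)
    · have h1 := Yker_val_of_bip y.2 hb rfl
      have h2 : y.1 ((compGraph E).connectedComponentMk v).out = 0 :=
        congrFun hy ⟨_, hb⟩
      rw [h1, h2]; simp
    · exact yker_zero_of_not_bip (Yker_hy1 y.2) (Yker_hy2 y.2) hb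
  · intro t
    refine ⟨⟨fun v => bval t ((compGraph E).connectedComponentMk v) v, bval_mem t⟩, ?_⟩
    funext C
    exact bval_at_out t C

lemma finrank_Yker :
    Module.finrank ℝ (Yker E) =
      Nat.card {C : (compGraph E).ConnectedComponent // BipProp E C} := by
  rw [(LinearEquiv.ofBijective (phi E) phi_bijective).finrank_eq]
  letI : Fintype {C : (compGraph E).ConnectedComponent // BipProp E C} :=
    Fintype.ofFinite _
  rw [Module.finrank_pi, Nat.card_eq_fintype_card]

end equiv2

section matrixpart
open Matrix

variable (E : Finset (Sym2 V))

def auxN : Matrix V {e // e ∈ E} ℝ := fun v e => if v ∈ (e : Sym2 V) then (1:ℝ) else 0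

variable {E}

lemma auxN_mulVec (x : Sym2 V → ℝ) (v : V) :
    ((auxN E).mulVec (fun e => x e.1)) v = ∑ e ∈ E with v ∈ e, x e := by
  rw [Finset.sum_filter]
  simp only [Matrix.mulVec, dotProduct, auxN, ite_mul, one_mul, zero_mul]
  rw [Finset.univ_eq_attach, Finset.sum_attach E (fun e => if v ∈ e then x e else 0)]

lemma auxNT_mulVec (y : V → ℝ) (e : {e // e ∈ E}) :
    ((auxN E)ᵀ.mulVec y) e = ∑ v ∈ univ with v ∈ e.1, y v := by
  rw [Finset.sum_filter]
  simp only [Matrix.mulVec, dotProduct, Matrix.transpose_apply, auxN, ite_mul, one_mul,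
    zero_mul]

lemma Yker_eq_ker : Yker E = LinearMap.ker (auxN E)ᵀ.mulVecLin := by
  ext y
  rw [LinearMap.mem_ker, Matrix.mulVecLin_apply]
  constructor
  · intro hy
    funext e
    rw [Pi.zero_apply, auxNT_mulVec]
    exact hy e.1 e.2
  · intro hy e he
    have := congrFun hy ⟨e, he⟩
    rwa [Pi.zero_apply, auxNT_mulVec] at this

variable (E)

def auxK : Submodule ℝ (Sym2 V → ℝ) where
  carrier := {x | (∀ e ∉ E, x e = 0) ∧ ∀ v : V, ∑ e ∈ E with v ∈ e, x e = 0}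
  add_mem' := by
    rintro a b ⟨ha1, ha2⟩ ⟨hb1, hb2⟩
    refine ⟨fun e he => by simp [ha1 e he, hb1 e he], fun v => ?_⟩
    simp only [Pi.add_apply, Finset.sum_add_distrib, ha2 v, hb2 v, add_zero]
  zero_mem' := ⟨fun e _ => rfl, fun v => by simp⟩
  smul_mem' := by
    rintro c a ⟨ha1, ha2⟩
    refine ⟨fun e he => by simp [ha1 e he], fun v => ?_⟩
    simp only [Pi.smul_apply, smul_eq_mul, ← Finset.mul_sum, ha2 v, mul_zero]

variable {E}

noncomputable def kequiv : auxK E ≃ₗ[ℝ] LinearMap.ker (auxN E).mulVecLin where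
  toFun x := ⟨fun e => x.1 e.1, by
    rw [LinearMap.mem_ker, Matrix.mulVecLin_apply]
    funext v
    rw [Pi.zero_apply, auxN_mulVec]
    exact x.2.2 v⟩
  map_add' := fun a b => rfl
  map_smul' := fun c a => rfl
  invFun z := ⟨fun e => if h : e ∈ E then z.1 ⟨e, h⟩ else 0, by
    refine ⟨fun e he => dif_neg he, fun v => ?_⟩
    have hfe : (fun e : {e // e ∈ E} =>
        (fun e' => if h : e' ∈ E then z.1 ⟨e', h⟩ else 0) e.1) = z.1 := by
      funext e; simp [e.2]
    have := auxN_mulVec (E := E) (fun e' => if h : e' ∈ E then z.1 ⟨e', h⟩ else 0) v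
    rw [hfe] at this
    rw [← this]
    have hz := z.2
    rw [LinearMap.mem_ker, Matrix.mulVecLin_apply] at hz
    rw [hz, Pi.zero_apply]⟩
  left_inv := by
    rintro ⟨x, hx⟩
    apply Subtype.ext
    funext e
    by_cases h : e ∈ E
    · simp [h]
    · simp [h, (hx.1 e h).symm]
  right_inv := by
    rintro ⟨z, hz⟩
    apply Subtype.ext
    funext e
    simp [e.2]

lemma dim_identity :
    Module.finrank ℝ (auxK E) + Fintype.card V =
      E.card + Nat.card {C : (compGraph E).ConnectedComponent // BipProp E C} := by
  have h1 := LinearMap.finrank_range_add_finrank_ker (auxN E).mulVecLin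
  have h2 := LinearMap.finrank_range_add_finrank_ker (auxN E)ᵀ.mulVecLin
  rw [Module.finrank_pi, Fintype.card_coe] at h1
  rw [Module.finrank_pi] at h2
  have h3 : Module.finrank ℝ (LinearMap.range (auxN E)ᵀ.mulVecLin) =
      Module.finrank ℝ (LinearMap.range (auxN E).mulVecLin) :=
    Matrix.rank_transpose (auxN E)
  have h4 : Module.finrank ℝ (LinearMap.ker (auxN E)ᵀ.mulVecLin) =
      Nat.card {C : (compGraph E).ConnectedComponent // BipProp E C} := by
    rw [← Yker_eq_ker, finrank_Yker]
  have h5 : Module.finrank ℝ (auxK E) =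
      Module.finrank ℝ (LinearMap.ker (auxN E).mulVecLin) :=
    (kequiv (E := E)).finrank_eq
  omega

end matrixpart



section affinepart
open Matrix

variable {E : Finset (Sym2 V)}

lemma exists_pos_point (hpos : IsPositive E) (hne : E.Nonempty) :
    ∃ xp : Sym2 V → ℝ, xp ∈ PG E ∧ ∀ e ∈ E, 0 < xp e := by
  classical
  choose! L r hmagic hLpos using fun e he => hpos e he
  have hm1 : ∀ e ∈ E, ∀ f ∉ E, L e f = 0 := fun e he => (hmagic e he).1
  have hm2 : ∀ e ∈ E, ∀ v : V, ∑ f ∈ E with v ∈ f, L e f = r e := fun e he => (hmagic e he).2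
  set Lt : Sym2 V → ℕ := fun f => ∑ e ∈ E, L e f with hLtdef
  set R : ℕ := ∑ e ∈ E, r e with hRdef
  have hLtsum : ∀ v : V, ∑ f ∈ E with v ∈ f, Lt f = R := by
    intro v
    calc ∑ f ∈ E with v ∈ f, Lt f = ∑ e ∈ E, ∑ f ∈ E with v ∈ f, L e f := Finset.sum_comm
    _ = R := Finset.sum_congr rfl fun e he => hm2 e he v
  have hLtzero : ∀ f ∉ E, Lt f = 0 := fun f hf =>
    Finset.sum_eq_zero fun e he => hm1 e he f hf
  have hLtpos : ∀ e ∈ E, 0 < Lt e := fun e he =>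
    lt_of_lt_of_le (hLpos e he)
      (Finset.single_le_sum (f := fun e' => L e' e) (fun i _ => Nat.zero_le _) he)
  have hRpos : 0 < R := by
    obtain ⟨e0, he0⟩ := hne
    have hv : e0.out.1 ∈ e0 := Sym2.out_fst_mem e0
    have h1 : Lt e0 ≤ ∑ f ∈ E with e0.out.1 ∈ f, Lt f :=
      Finset.single_le_sum (fun i _ => Nat.zero_le _) (Finset.mem_filter.2 ⟨he0, hv⟩)
    rw [hLtsum] at h1
    exact lt_of_lt_of_le (hLtpos e0 he0) h1
  have hRpos' : (0 : ℝ) < (R : ℝ) := by exact_mod_cast hRpos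
  refine ⟨fun f => (Lt f : ℝ) / R, ⟨?_, ?_, ?_⟩, ?_⟩
  · intro e he
    show (Lt e : ℝ) / R = 0
    rw [hLtzero e he]; simp
  · intro e
    show (0:ℝ) ≤ (Lt e : ℝ) / R
    positivity
  · intro v
    show ∑ f ∈ E with v ∈ f, (Lt f : ℝ) / R = 1
    rw [← Finset.sum_div]
    have : ∑ f ∈ E with v ∈ f, (Lt f : ℝ) = (R : ℝ) := by
      rw [← Nat.cast_sum, hLtsum v]
    rw [this, div_self hRpos'.ne']
  · intro e he
    show (0:ℝ) < (Lt e : ℝ) / R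
    exact div_pos (by exact_mod_cast hLtpos e he) hRpos'

lemma exists_eps {α : Type*} (S : Finset α) (f g : α → ℝ) (hf : ∀ e ∈ S, 0 < f e) :
    ∃ ε : ℝ, 0 < ε ∧ ∀ e ∈ S, |ε * g e| ≤ f e := by
  rcases S.eq_empty_or_nonempty with h | h
  · exact ⟨1, one_pos, by simp [h]⟩
  · have hpos : 0 < S.inf' h (fun e => f e / (|g e| + 1)) := by
      rw [Finset.lt_inf'_iff]
      intro e he
      exact div_pos (hf e he) (by positivity)
    refine ⟨S.inf' h (fun e => f e / (|g e| + 1)), hpos, ?_⟩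
    intro e he
    have h1 : S.inf' h (fun e => f e / (|g e| + 1)) ≤ f e / (|g e| + 1) :=
      Finset.inf'_le _ he
    rw [abs_mul, abs_of_pos hpos]
    calc S.inf' h (fun e => f e / (|g e| + 1)) * |g e|
        ≤ (f e / (|g e| + 1)) * |g e| :=
          mul_le_mul_of_nonneg_right h1 (abs_nonneg _)
    _ ≤ f e := by
        rw [div_mul_eq_mul_div, div_le_iff₀ (by positivity)]
        nlinarith [abs_nonneg (g e), hf e he]

lemma perturb_mem {xp : Sym2 V → ℝ} (hxp : xp ∈ PG E) {d : Sym2 V → ℝ}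
    (hd : d ∈ auxK E) {ε : ℝ} (hbound : ∀ e ∈ E, |ε * d e| ≤ xp e) :
    xp + ε • d ∈ PG E := by
  refine ⟨fun e he => ?_, fun e => ?_, fun v => ?_⟩
  · show xp e + ε * d e = 0
    rw [hxp.1 e he, hd.1 e he, mul_zero, add_zero]
  · show 0 ≤ xp e + ε * d e
    by_cases he : e ∈ E
    · linarith [neg_abs_le (ε * d e), hbound e he]
    · rw [hxp.1 e he, hd.1 e he, mul_zero, add_zero]
  · show ∑ e ∈ E with v ∈ e, (xp e + ε * d e) = 1
    rw [Finset.sum_add_distrib, ← Finset.mul_sum, hxp.2.2 v, hd.2 v, mul_zero, add_zero]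

lemma direction_affineSpan_PG (hpos : IsPositive E) (hne : E.Nonempty) :
    (affineSpan ℝ (PG E)).direction = auxK E := by
  obtain ⟨xp, hxp, hxppos⟩ := exists_pos_point hpos hne
  have hspan : affineSpan ℝ (PG E) = AffineSubspace.mk' xp (auxK E) := by
    apply le_antisymm
    · rw [affineSpan_le]
      intro x hx
      refine AffineSubspace.mem_mk'.mpr ⟨fun e he => ?_, fun v => ?_⟩
      · show x e - xp e = 0
        rw [hx.1 e he, hxp.1 e he, sub_zero]
      · show ∑ e ∈ E with v ∈ e, (x e - xp e) = 0
        rw [Finset.sum_sub_distrib, hx.2.2 v, hxp.2.2 v, sub_self]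
    · intro z hz
      replace hz : z -ᵥ xp ∈ auxK E := AffineSubspace.mem_mk'.mp hz
      set d : Sym2 V → ℝ := z - xp with hddef
      obtain ⟨ε, hε, hbound⟩ := exists_eps E (fun e => xp e) (fun e => d e) hxppos
      have hy : xp + ε • d ∈ PG E := perturb_mem hxp hz hbound
      have hxpmem : xp ∈ affineSpan ℝ (PG E) := mem_affineSpan ℝ hxp
      have hymem : xp + ε • d ∈ affineSpan ℝ (PG E) := mem_affineSpan ℝ hy
      have key := AffineSubspace.smul_vsub_vadd_mem (affineSpan ℝ (PG E)) (1/ε)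
        hymem hxpmem hxpmem
      have heq : (1/ε) • ((xp + ε • d) -ᵥ xp) +ᵥ xp = z := by
        have h1 : (xp + ε • d) -ᵥ xp = ε • d := by
          rw [vsub_eq_sub]; ring_nf
        rw [h1, smul_smul, one_div_mul_cancel hε.ne', one_smul, vadd_eq_add]
        rw [hddef]; ring_nf
      rwa [heq] at key
  rw [hspan, AffineSubspace.direction_mk']

end affinepart



section rationalpart
open Matrix

variable {E : Finset (Sym2 V)}

lemma extreme_rational {x : Sym2 V → ℝ} (hx : x ∈ Set.extremePoints ℝ (PG E)) :
    ∀ e : Sym2 V, ∃ q : ℚ, x e = (q : ℝ) := by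
  classical
  obtain ⟨hxPG, hext⟩ := hx
  set S : Finset (Sym2 V) := E.filter (fun e => x e ≠ 0) with hSdef
  have hSE : S ⊆ E := Finset.filter_subset _ _
  have hxpos : ∀ e ∈ S, 0 < x e := by
    intro e he
    rw [hSdef, Finset.mem_filter] at he
    exact (hxPG.2.1 e).lt_of_ne' he.2
  have hxzero : ∀ e ∉ S, x e = 0 := by
    intro e he
    by_cases heE : e ∈ E
    · by_contra hne
      exact he (Finset.mem_filter.2 ⟨heE, hne⟩)
    · exact hxPG.1 e heE
  -- Step 1: the vertex sums of x over S-columns are all 1.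
  have hstep1 : (auxN S).mulVec (fun e => x e.1) = fun _ => (1:ℝ) := by
    funext v
    rw [auxN_mulVec]
    have hsub : S.filter (v ∈ ·) ⊆ E.filter (v ∈ ·) :=
      Finset.filter_subset_filter _ hSE
    rw [Finset.sum_subset hsub (fun e heE heS => ?_)]
    · exact hxPG.2.2 v
    · apply hxzero
      intro heS'
      exact heS (Finset.mem_filter.2 ⟨heS', (Finset.mem_filter.1 heE).2⟩)
  -- Step 2: the S-columns are linearly independent.
  have hinj : ∀ d : {e // e ∈ S} → ℝ, (auxN S).mulVec d = 0 → d = 0 := by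
    intro d hd
    set dd : Sym2 V → ℝ := fun e => if h : e ∈ S then d ⟨e, h⟩ else 0 with hdddef
    have hfe : (fun e : {e // e ∈ S} => dd e.1) = d := funext fun e => dif_pos e.2
    have hddK : dd ∈ auxK E := by
      refine ⟨fun e he => dif_neg (fun h => he (hSE h)), fun v => ?_⟩
      have hsub : S.filter (v ∈ ·) ⊆ E.filter (v ∈ ·) :=
        Finset.filter_subset_filter _ hSE
      rw [← Finset.sum_subset hsub (fun e heE heS => ?_)]
      · have := auxN_mulVec (E := S) dd v
        rw [hfe, hd] at this
        exact this.symm.trans rfl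
      · exact dif_neg (fun h => heS (Finset.mem_filter.2 ⟨h, (Finset.mem_filter.1 heE).2⟩))
    obtain ⟨ε, hε, hb⟩ := exists_eps S (fun e => x e) (fun e => dd e) hxpos
    have hbE : ∀ e ∈ E, |ε * dd e| ≤ x e := by
      intro e he
      by_cases heS : e ∈ S
      · exact hb e heS
      · have : dd e = 0 := dif_neg heS
        rw [this, mul_zero, abs_zero]
        exact hxPG.2.1 e
    have hbE' : ∀ e ∈ E, |(-ε) * dd e| ≤ x e := by
      intro e he
      rw [neg_mul, abs_neg]
      exact hbE e he
    have h1 : x + ε • dd ∈ PG E := perturb_mem hxPG hddK hbE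
    have h2 : x + (-ε) • dd ∈ PG E := perturb_mem hxPG hddK hbE'
    have hseg : x ∈ openSegment ℝ (x + ε • dd) (x + (-ε) • dd) := by
      refine ⟨1/2, 1/2, by norm_num, by norm_num, by norm_num, ?_⟩
      funext e
      show (1/2 : ℝ) * (x e + ε * dd e) + (1/2 : ℝ) * (x e + (-ε) * dd e) = x e
      ring
    have hcan : x + ε • dd = x := hext h1 h2 hseg
    have hdd0 : dd = 0 := by
      have h0 : ε • dd = 0 := by
        have := congrArg (fun f => f - x) hcan
        simpa [add_sub_cancel_left] using this
      rcases smul_eq_zero.1 h0 with h | h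
      · exact absurd h hε.ne'
      · exact h
    funext e
    rw [← hfe]
    show dd e.1 = 0
    rw [hdd0]; rfl
  -- Step 3: build the rational linear system.
  set B : Matrix V {e // e ∈ S} ℚ := fun v e => if v ∈ (e : Sym2 V) then 1 else 0 with hBdef
  have hmap : B.map ⇑(Rat.castHom ℝ) = auxN S := by
    funext v e
    rw [Matrix.map_apply]
    simp [hBdef, Matrix.map_apply, auxN, apply_ite (Rat.cast : ℚ → ℝ)]
  set C : Matrix {e // e ∈ S} {e // e ∈ S} ℚ := Bᵀ * B with hCdef
  have hCmap : C.map ⇑(Rat.castHom ℝ) = (auxN S)ᵀ * auxN S := by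
    rw [hCdef, Matrix.map_mul (f := Rat.castHom ℝ), Matrix.transpose_map, hmap]
  -- C is injective over ℝ, hence invertible over ℚ.
  have hC'inj : ∀ w : {e // e ∈ S} → ℝ, ((auxN S)ᵀ * auxN S).mulVec w = 0 → w = 0 := by
    intro w hw
    apply hinj
    have hdot : ((auxN S).mulVec w) ⬝ᵥ ((auxN S).mulVec w) = 0 := by
      have h1 : ((auxN S)ᵀ * auxN S).mulVec w = (auxN S)ᵀ.mulVec ((auxN S).mulVec w) :=
        (Matrix.mulVec_mulVec _ _ _).symm
      calc ((auxN S).mulVec w) ⬝ᵥ ((auxN S).mulVec w)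
          = (w ᵥ* (auxN S)ᵀ) ⬝ᵥ ((auxN S).mulVec w) := by rw [Matrix.vecMul_transpose]
        _ = w ⬝ᵥ ((auxN S)ᵀ.mulVec ((auxN S).mulVec w)) := (Matrix.dotProduct_mulVec _ _ _).symm
        _ = w ⬝ᵥ (0 : {e // e ∈ S} → ℝ) := by rw [← h1, hw]
        _ = 0 := dotProduct_zero _
    exact dotProduct_self_eq_zero.1 hdot
  have hCinjective : Function.Injective (((auxN S)ᵀ * auxN S).mulVec) := by
    intro a b hab
    have h0 : ((auxN S)ᵀ * auxN S).mulVec (a - b) = 0 := by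
      rw [Matrix.mulVec_sub, hab, sub_self]
    exact sub_eq_zero.1 (hC'inj _ h0)
  have hdetR : IsUnit ((auxN S)ᵀ * auxN S).det :=
    (Matrix.isUnit_iff_isUnit_det _).1 (Matrix.mulVec_injective_iff_isUnit.1 hCinjective)
  have hdetmap : ((C.det : ℚ) : ℝ) = ((auxN S)ᵀ * auxN S).det := by
    rw [← hCmap]
    exact (Rat.castHom ℝ).map_det C
  have hCunit : IsUnit C.det := by
    rw [isUnit_iff_ne_zero]
    intro h0
    apply hdetR.ne_zero
    rw [← hdetmap, h0, Rat.cast_zero]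
  -- Step 4: solve the system over ℚ.
  set q : {e // e ∈ S} → ℚ := C⁻¹.mulVec (Bᵀ.mulVec (fun _ => 1)) with hqdef
  have hCq : C.mulVec q = Bᵀ.mulVec (fun _ => 1) := by
    rw [hqdef, Matrix.mulVec_mulVec, Matrix.mul_nonsing_inv C hCunit, Matrix.one_mulVec]
  have hsolve : (fun e => ((q e : ℚ) : ℝ)) = fun e : {e // e ∈ S} => x e.1 := by
    apply hCinjective
    have hL : ((auxN S)ᵀ * auxN S).mulVec (fun e => ((q e : ℚ) : ℝ)) =
        fun i => (((Bᵀ.mulVec (fun _ => 1)) i : ℚ) : ℝ) := by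
      funext i
      rw [← hCmap]
      show ((C.map ⇑(Rat.castHom ℝ)).mulVec (⇑(Rat.castHom ℝ) ∘ q)) i = _
      rw [← (Rat.castHom ℝ).map_mulVec C q i, hCq]
      rfl
    have hR : ((auxN S)ᵀ * auxN S).mulVec (fun e : {e // e ∈ S} => x e.1) =
        fun i => (((Bᵀ.mulVec (fun _ => 1)) i : ℚ) : ℝ) := by
      funext i
      rw [← Matrix.mulVec_mulVec, hstep1]
      have hone : (fun _ : V => (1:ℝ)) = (⇑(Rat.castHom ℝ) ∘ fun _ : V => (1:ℚ)) := by
        funext v; simp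
      rw [hone, ← hmap, ← Matrix.transpose_map,
        ← (Rat.castHom ℝ).map_mulVec Bᵀ (fun _ => 1) i]
      rfl
    rw [hL, hR]
  intro e
  by_cases he : e ∈ S
  · exact ⟨q ⟨e, he⟩, (congrFun hsolve ⟨e, he⟩).symm⟩
  · exact ⟨0, by rw [hxzero e he]; norm_num⟩

end rationalpart


/-- Let `G` be a finite positive graph with at least one edge.  Then `P_G` is a
rational polytope (all its vertices, i.e. extreme points, have rational
coordinates) of dimension `q - n + b`, where `q` is the number of edges, `n` the
number of vertices and `b` the number of bipartite connected components (the
dimension identity is stated additively to avoid natural subtraction). -/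
theorem PG_rational_and_dimension (E : Finset (Sym2 V)) (hpos : IsPositive E)
    (hne : E.Nonempty) :
    (∀ x ∈ Set.extremePoints ℝ (PG E), ∀ e : Sym2 V, ∃ q : ℚ, x e = (q : ℝ)) ∧
    Module.finrank ℝ (affineSpan ℝ (PG E)).direction + Fintype.card V =
      E.card + numBipComp E := by
  refine ⟨fun x hx e => extreme_rational hx e, ?_⟩
  rw [direction_affineSpan_PG hpos hne]
  have h := dim_identity (E := E)
  have hb : numBipComp E =
      Nat.card {C : (compGraph E).ConnectedComponent // BipProp E C} := rfl
  rw [hb]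
  exact h
end

section
/- Let G be a finite positive graph with n vertices, q edges, at least one edge, and b bipartite connected components. Then the d-dimensional faces of the polytope P_G are exactly the d-dimensional polytopes P_H of magic labelings of positive subgraphs H of G on the same n vertices with at most n - b + d edges (where P_H is embedded in P_G by labeling the edges of G not in H with zero). -/
open Finset

variable {V : Type*} [Fintype V] [DecidableEq V]

/-- A face of a polytope `P`: either `P` itself, or the (nonempty) intersection of `P`
with a supporting hyperplane. -/
def IsFaceOf {W : Type*} [AddCommGroup W] [Module ℝ W] (F P : Set W) : Prop :=
  F = P ∨ ∃ (c : W →ₗ[ℝ] ℝ) (δ : ℝ), c ≠ 0 ∧ (∀ x ∈ P, c x ≤ δ) ∧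
    (∃ x ∈ P, c x = δ) ∧ F = {x ∈ P | c x = δ}


set_option linter.unusedSectionVars false
set_option linter.unusedVariables false
set_option maxHeartbeats 1600000
open Module Matrix

section RatLin
variable {ι κ : Type*} [Fintype ι] [Fintype κ] [DecidableEq ι] [DecidableEq κ]

noncomputable def rcast (x : ι → ℚ) : ι → ℝ := fun i => (x i : ℝ)

lemma rcast_add (x y : ι → ℚ) : rcast (x + y) = rcast x + rcast y := by
  funext i; simp [rcast]

lemma rcast_smul (c : ℚ) (x : ι → ℚ) : rcast (c • x) = (c : ℝ) • rcast x := by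
  funext i; simp [rcast]

lemma gram_identity {R : Type*} [CommRing R] {n : Type*} [Fintype n]
    (u : ι → (n → R)) (v : ι → R) :
    ∑ k, (∑ i, v i * u i k) * (∑ i, v i * u i k)
      = ∑ i, v i * ∑ j, (∑ k, u i k * u j k) * v j := by
  simp only [Finset.sum_mul_sum, Finset.mul_sum, Finset.sum_mul]
  rw [Finset.sum_comm]
  refine Finset.sum_congr rfl fun i _ => Finset.sum_comm.trans ?_
  refine Finset.sum_congr rfl fun j _ => Finset.sum_congr rfl fun k _ => by ring

/-- ℚ-linearly independent rational vectors are ℝ-linearly independent. -/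
lemma rcast_linearIndependent {n : Type*} [Fintype n] [DecidableEq n] {u : ι → (n → ℚ)}
    (h : LinearIndependent ℚ u) : LinearIndependent ℝ (fun i => rcast (u i)) := by
  classical
  set G : Matrix ι ι ℚ := fun i j => ∑ k, u i k * u j k with hG
  have hGdet : G.det ≠ 0 := by
    intro hdet
    obtain ⟨v, hv0, hv⟩ := Matrix.exists_mulVec_eq_zero_iff.2 hdet
    have hsq : ∑ k, (∑ i, v i * u i k) * (∑ i, v i * u i k) = 0 := by
      rw [gram_identity]
      have : ∀ i, (G.mulVec v) i = 0 := fun i => congrFun hv i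
      simp only [Matrix.mulVec, dotProduct, hG] at this
      simp [this]
    have hvanish : ∀ k, ∑ i, v i * u i k = 0 := by
      intro k
      have := Finset.sum_eq_zero_iff_of_nonneg
        (fun k _ => mul_self_nonneg (∑ i, v i * u i k)) |>.1 hsq k (Finset.mem_univ k)
      exact mul_self_eq_zero.1 this
    refine hv0 (funext (Fintype.linearIndependent_iff.1 h v ?_))
    funext k
    simpa [Finset.sum_apply, smul_eq_mul] using hvanish k
  -- now over ℝ
  rw [Fintype.linearIndependent_iff]
  intro g hg
  have hGR : (G.map (Rat.cast : ℚ → ℝ)).det ≠ 0 := by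
    rw [show (G.map (Rat.cast : ℚ → ℝ)) = (Rat.castHom ℝ).mapMatrix G from rfl,
      ← RingHom.map_det]
    intro h'
    apply hGdet
    have : ((G.det : ℚ) : ℝ) = 0 := h'
    exact_mod_cast this
  have hmv : (G.map (Rat.cast : ℚ → ℝ)).mulVec g = 0 := by
    funext j
    have hgk : ∀ k, ∑ i, g i * (u i k : ℝ) = 0 := by
      intro k
      have := congrFun hg k
      simpa [Finset.sum_apply, rcast, smul_eq_mul] using this
    have : ∑ k, (∑ i, g i * (u i k : ℝ)) * (u j k : ℝ) = 0 := by simp [hgk]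
    simp only [Matrix.mulVec, dotProduct, Matrix.map_apply]
    simp only [Matrix.mulVec, dotProduct, Matrix.map_apply, hG, Pi.zero_apply]
    push_cast
    rw [← this]
    simp only [Finset.sum_mul, Finset.mul_sum]
    rw [Finset.sum_comm]
    refine Finset.sum_congr rfl fun i _ => Finset.sum_congr rfl fun k _ => by ring
  intro i
  by_contra hgi
  exact hGR (Matrix.exists_mulVec_eq_zero_iff.1 ⟨g, fun h0 => hgi (congrFun h0 i), hmv⟩)

end RatLin

section RatLin2
open Matrix
variable {ι κ : Type*} [Fintype ι] [Fintype κ] [DecidableEq ι] [DecidableEq κ]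

lemma rcast_sum {σ : Finset κ} (g : κ → ι → ℚ) :
    rcast (∑ i ∈ σ, g i) = ∑ i ∈ σ, rcast (g i) := by
  funext j; simp [rcast, Finset.sum_apply]

lemma rcast_mem_span {n : Type*} [Fintype n] (w : κ → (n → ℚ)) {x : n → ℚ}
    (hx : x ∈ Submodule.span ℚ (Set.range w)) :
    rcast x ∈ Submodule.span ℝ (Set.range fun i => rcast (w i)) := by
  obtain ⟨c, hc⟩ := (Submodule.mem_span_range_iff_exists_fun ℚ).1 hx
  rw [← hc]
  refine (Submodule.mem_span_range_iff_exists_fun ℝ).2 ⟨fun i => (c i : ℝ), ?_⟩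
  funext j
  simp [rcast, Finset.sum_apply]

lemma rcast_mulVec (A : Matrix κ ι ℚ) (x : ι → ℚ) :
    (A.map (Rat.cast : ℚ → ℝ)).mulVec (rcast x) = rcast (A.mulVec x) := by
  funext k
  simp [Matrix.mulVec, dotProduct, rcast, Finset.sum_apply]

/-- A rational linear system with a real solution has rational solutions densely
near any real solution. -/
lemma rat_solution_dense (A : Matrix κ ι ℚ) (b : κ → ℚ) (z : ι → ℝ)
    (hz : (A.map (Rat.cast : ℚ → ℝ)).mulVec z = rcast b) {ε : ℝ} (hε : 0 < ε) :
    ∃ y : ι → ℚ, A.mulVec y = b ∧ ∀ i, |(y i : ℝ) - z i| < ε := by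
  classical
  set f : (ι → ℚ) →ₗ[ℚ] (κ → ℚ) := A.mulVecLin with hf
  set fR : (ι → ℝ) →ₗ[ℝ] (κ → ℝ) := (A.map (Rat.cast : ℚ → ℝ)).mulVecLin with hfR
  -- basis of the range of f
  set r := finrank ℚ (LinearMap.range f) with hr
  obtain ⟨w⟩ : Nonempty (Basis (Fin r) ℚ (LinearMap.range f)) := ⟨Module.finBasis ℚ _⟩
  set what : Fin r → (κ → ℚ) := fun i => (w i : κ → ℚ) with hwhat
  have hwind : LinearIndependent ℚ what :=
    w.linearIndependent.map' (LinearMap.range f).subtype (Submodule.ker_subtype _)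
  have hwspan : Submodule.span ℚ (Set.range what) = LinearMap.range f := by
    have hre : Set.range what = (LinearMap.range f).subtype '' (Set.range w) := by
      rw [← Set.range_comp]; rfl
    rw [hre, ← Submodule.map_span, w.span_eq, Submodule.map_top, Submodule.range_subtype]
  -- the real range is contained in the real span of what
  have hranR : LinearMap.range fR ≤ Submodule.span ℝ (Set.range fun i => rcast (what i)) := by
    rw [hfR, Matrix.range_mulVecLin]
    rw [Submodule.span_le]
    rintro _ ⟨j, rfl⟩
    have hcol : (A.map (Rat.cast : ℚ → ℝ))ᵀ j = rcast (Aᵀ j) := by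
      funext k; simp [rcast, Matrix.transpose, Matrix.map_apply]
    change (A.map (Rat.cast : ℚ → ℝ))ᵀ j ∈ _
    rw [hcol]
    have : Aᵀ j ∈ LinearMap.range f := by
      refine ⟨Pi.single j 1, ?_⟩
      funext k
      simp [hf, Matrix.mulVecLin, Matrix.mulVec, dotProduct, Pi.single_apply,
        Finset.sum_ite_eq' (Finset.univ) j (fun i => A k i)]
    exact rcast_mem_span what (hwspan ▸ this)
  -- rcast of what's are in the real range
  have hwmemR : ∀ i, rcast (what i) ∈ LinearMap.range fR := by
    intro i
    have : what i ∈ LinearMap.range f := hwspan ▸ Submodule.subset_span ⟨i, rfl⟩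
    obtain ⟨x, hx⟩ := this
    exact ⟨rcast x, by rw [hfR, Matrix.mulVecLin_apply, rcast_mulVec, ← hx]; rfl⟩
  have hwindR : LinearIndependent ℝ (fun i => rcast (what i)) := rcast_linearIndependent hwind
  -- rational solvability
  have hbran : b ∈ LinearMap.range f := by
    by_contra hb
    have hb' : b ∉ Submodule.span ℚ (Set.range what) := fun h => hb (hwspan ▸ h)
    have hsnoc : LinearIndependent ℚ (Fin.snoc what b) :=
      linearIndependent_fin_snoc.2 ⟨hwind, hb'⟩
    have hsnocR := rcast_linearIndependent hsnoc
    have heq : (rcast ∘ (Fin.snoc what b : Fin (r+1) → κ → ℚ))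
        = Fin.snoc (fun i => rcast (what i)) (rcast b) := Fin.comp_snoc _ _ _
    have hsnocR' : LinearIndependent ℝ
        (Fin.snoc (fun i => rcast (what i)) (rcast b) : Fin (r+1) → κ → ℝ) := by
      rw [← heq]; exact hsnocR
    replace hsnocR := hsnocR'
    have hnb : rcast b ∉ Submodule.span ℝ (Set.range fun i => rcast (what i)) :=
      (linearIndependent_fin_snoc.1 hsnocR).2
    exact hnb (hranR ⟨z, by rw [hfR, Matrix.mulVecLin_apply, hz]⟩)
  obtain ⟨x₀, hx₀⟩ := hbran
  -- basis of the kernel of f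
  set k := finrank ℚ (LinearMap.ker f) with hk
  obtain ⟨v⟩ : Nonempty (Basis (Fin k) ℚ (LinearMap.ker f)) := ⟨Module.finBasis ℚ _⟩
  set vhat : Fin k → (ι → ℚ) := fun i => (v i : ι → ℚ) with hvhat
  have hvind : LinearIndependent ℚ vhat :=
    v.linearIndependent.map' (LinearMap.ker f).subtype (Submodule.ker_subtype _)
  have hvker : ∀ i, f (vhat i) = 0 := fun i => (v i).2
  have hvindR : LinearIndependent ℝ (fun i => rcast (vhat i)) := rcast_linearIndependent hvind
  -- the real kernel equals the real span of vhat
  have hkerR : Submodule.span ℝ (Set.range fun i => rcast (vhat i)) = LinearMap.ker fR := by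
    refine Submodule.eq_of_le_of_finrank_le ?_ ?_
    · rw [Submodule.span_le]
      rintro _ ⟨i, rfl⟩
      simp only [SetLike.mem_coe, LinearMap.mem_ker, hfR, Matrix.mulVecLin_apply]
      rw [rcast_mulVec]
      have : A.mulVec (vhat i) = 0 := hvker i
      rw [this]
      funext j; simp [rcast]
    · have h1 : finrank ℝ ↥(Submodule.span ℝ (Set.range fun i => rcast (vhat i))) = k := by
        rw [finrank_span_eq_card hvindR, Fintype.card_fin]
      rw [h1]
      have h2 : r ≤ finrank ℝ (LinearMap.range fR) := by
        have : Submodule.span ℝ (Set.range fun i => rcast (what i)) ≤ LinearMap.range fR := by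
          rw [Submodule.span_le]; rintro _ ⟨i, rfl⟩; exact hwmemR i
        calc r = finrank ℝ ↥(Submodule.span ℝ (Set.range fun i => rcast (what i))) := by
              rw [finrank_span_eq_card hwindR, Fintype.card_fin]
          _ ≤ finrank ℝ (LinearMap.range fR) := Submodule.finrank_mono this
      have hQ : r + k = Fintype.card ι := by
        rw [hr, hk, LinearMap.finrank_range_add_finrank_ker f, finrank_fintype_fun_eq_card]
      have hRnk : finrank ℝ (LinearMap.range fR) + finrank ℝ (LinearMap.ker fR)
          = Fintype.card ι := by
        rw [LinearMap.finrank_range_add_finrank_ker fR, finrank_fintype_fun_eq_card]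
      omega
  -- density
  have hdiff : z - rcast x₀ ∈ LinearMap.ker fR := by
    rw [LinearMap.mem_ker, map_sub]
    rw [hfR, Matrix.mulVecLin_apply, Matrix.mulVecLin_apply, hz, rcast_mulVec,
      show A.mulVec x₀ = b from hx₀, sub_self]
  rw [← hkerR] at hdiff
  obtain ⟨c, hc⟩ := (Submodule.mem_span_range_iff_exists_fun ℝ).1 hdiff
  -- choose rational approximations of c
  set M : Fin k → ℝ := fun i => ∑ j, |(vhat i j : ℝ)| with hM
  have hMnn : ∀ i, 0 ≤ M i := fun i => Finset.sum_nonneg fun j _ => abs_nonneg _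
  set S : ℝ := ∑ i, (M i + 1) with hS
  have hSnn : 0 ≤ S := Finset.sum_nonneg fun i _ => by linarith [hMnn i]
  set δ : ℝ := ε / (S + 1) with hδ
  have hδpos : 0 < δ := div_pos hε (by linarith)
  have hq : ∀ i : Fin k, ∃ q : ℚ, |(q : ℝ) - c i| < δ := by
    intro i
    obtain ⟨q, hq1, hq2⟩ := exists_rat_btwn (show c i - δ < c i + δ by linarith)
    exact ⟨q, by rw [abs_sub_lt_iff]; constructor <;> linarith⟩
  choose q hqd using hq
  refine ⟨x₀ + ∑ i, q i • vhat i, ?_, ?_⟩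
  · have : f (x₀ + ∑ i, q i • vhat i) = b := by
      rw [map_add, map_sum, hx₀]
      simp [hvker]
    simpa [hf, Matrix.mulVecLin_apply] using this
  · intro j
    have hzj : z j = (x₀ j : ℝ) + ∑ i, c i * (vhat i j : ℝ) := by
      have := congrFun hc j
      simp only [Finset.sum_apply, Pi.smul_apply, Pi.sub_apply, smul_eq_mul, rcast] at this
      linarith
    have hyj : (((x₀ + ∑ i, q i • vhat i) j : ℚ) : ℝ)
        = (x₀ j : ℝ) + ∑ i, (q i : ℝ) * (vhat i j : ℝ) := by
      have happ : (x₀ + ∑ i, q i • vhat i) j = x₀ j + ∑ i, q i * vhat i j := by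
        simp [Finset.sum_apply]
      rw [happ]
      push_cast
      ring
    rw [hyj, hzj]
    have hb1 : |∑ i, (q i : ℝ) * (vhat i j : ℝ) - ∑ i, c i * (vhat i j : ℝ)| ≤ δ * S := by
      rw [← Finset.sum_sub_distrib]
      refine (Finset.abs_sum_le_sum_abs _ _).trans ?_
      rw [hS, Finset.mul_sum]
      refine Finset.sum_le_sum fun i _ => ?_
      rw [← sub_mul, abs_mul]
      have h1 : |(q i : ℝ) - c i| ≤ δ := (hqd i).le
      have h2 : |(vhat i j : ℝ)| ≤ M i + 1 := by
        have : |(vhat i j : ℝ)| ≤ M i :=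
          Finset.single_le_sum (f := fun j => |(vhat i j : ℝ)|)
            (fun j _ => abs_nonneg _) (Finset.mem_univ j)
        linarith
      exact mul_le_mul h1 h2 (abs_nonneg _) hδpos.le
    have : δ * S < ε := by
      rw [hδ]
      rw [div_mul_eq_mul_div, div_lt_iff₀ (by linarith : (0:ℝ) < S + 1)]
      nlinarith
    calc |(x₀ j : ℝ) + ∑ i, (q i : ℝ) * (vhat i j : ℝ)
          - ((x₀ j : ℝ) + ∑ i, c i * (vhat i j : ℝ))|
        = |∑ i, (q i : ℝ) * (vhat i j : ℝ) - ∑ i, c i * (vhat i j : ℝ)| := by ring_nf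
      _ ≤ δ * S := hb1
      _ < ε := this

end RatLin2

section PGlemmas

/-- summing over the big edge set equals summing over the small one, for functions
vanishing off the small one. -/
lemma sum_eq_sum_subset {α : Type*} [AddCommMonoid α] {E' E : Finset (Sym2 V)} (hsub : E' ⊆ E)
    {x : Sym2 V → α} (h0 : ∀ e ∉ E', x e = 0) (v : V) :
    ∑ e ∈ E with v ∈ e, x e = ∑ e ∈ E' with v ∈ e, x e := by
  refine (Finset.sum_subset ?_ ?_).symm
  · exact Finset.filter_subset_filter _ hsub
  · intro e he hne
    refine h0 e fun he' => hne ?_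
    simp only [Finset.mem_filter] at he ⊢
    exact ⟨he', he.2⟩

lemma PG_subset {E' E : Finset (Sym2 V)} (hsub : E' ⊆ E) : PG E' ⊆ PG E := by
  rintro x ⟨h0, hnn, hsum⟩
  exact ⟨fun e he => h0 e fun he' => he (hsub he'), hnn,
    fun v => (sum_eq_sum_subset hsub (fun e he => h0 e he) v).trans (hsum v)⟩

lemma PG_convex (E : Finset (Sym2 V)) : Convex ℝ (PG E) := by
  rintro x ⟨hx0, hxnn, hxs⟩ y ⟨hy0, hynn, hys⟩ a b ha hb hab
  refine ⟨fun e he => by simp [hx0 e he, hy0 e he], fun e => by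
    have := hxnn e; have := hynn e
    simp only [Pi.add_apply, Pi.smul_apply, smul_eq_mul]
    nlinarith, fun v => ?_⟩
  simp only [Pi.add_apply, Pi.smul_apply, smul_eq_mul]
  rw [Finset.sum_add_distrib, ← Finset.mul_sum, ← Finset.mul_sum, hxs v, hys v]
  linarith

lemma PG_le_one {E : Finset (Sym2 V)} {x : Sym2 V → ℝ} (hx : x ∈ PG E) {e : Sym2 V}
    (he : e ∈ E) : x e ≤ 1 := by
  obtain ⟨h0, hnn, hsum⟩ := hx
  obtain ⟨a, b⟩ := e
  have hmem : s(a, b) ∈ E.filter (fun e => a ∈ e) := by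
    simp [Finset.mem_filter, he, Sym2.mem_iff]
  calc x s(a,b) ≤ ∑ e ∈ E with a ∈ e, x e :=
        Finset.single_le_sum (fun e _ => hnn e) hmem
    _ = 1 := hsum a

/-- A rational point of `P_{E'}` close to a given real point. -/
lemma exists_rat_near_pg (E' : Finset (Sym2 V)) {z : Sym2 V → ℝ} (h0 : ∀ e ∉ E', z e = 0)
    (hsum : ∀ v : V, ∑ e ∈ E' with v ∈ e, z e = 1) {ε : ℝ} (hε : 0 < ε) :
    ∃ y : Sym2 V → ℚ, (∀ e ∉ E', y e = 0) ∧ (∀ v : V, ∑ e ∈ E' with v ∈ e, y e = 1) ∧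
      ∀ e, |(y e : ℝ) - z e| < ε := by
  classical
  set A : Matrix (V ⊕ Sym2 V) (Sym2 V) ℚ := fun k e =>
    Sum.elim (fun v => if e ∈ E' ∧ v ∈ e then 1 else 0)
      (fun e0 => if e = e0 ∧ e0 ∉ E' then 1 else 0) k with hA
  set b : V ⊕ Sym2 V → ℚ := Sum.elim (fun _ => 1) (fun _ => 0) with hb
  have key : ∀ {R : Type} [Field R] (y : Sym2 V → R) (k : V ⊕ Sym2 V),
      ∑ e, (Sum.elim (fun v => if e ∈ E' ∧ v ∈ e then (1:R) else 0)
        (fun e0 => if e = e0 ∧ e0 ∉ E' then 1 else 0) k) * y e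
      = Sum.elim (fun v => ∑ e ∈ E' with v ∈ e, y e)
          (fun e0 => if e0 ∉ E' then y e0 else 0) k := by
    intro R _ y k
    rcases k with v | e0
    · simp only [Sum.elim_inl, ite_mul, one_mul, zero_mul]
      rw [← Finset.sum_filter]
      congr 1
      ext e
      simp [Finset.mem_filter, and_comm]
    · simp only [Sum.elim_inr, ite_mul, one_mul, zero_mul]
      by_cases h : e0 ∈ E'
      · simp [h]
      · rw [← Finset.sum_filter]
        have hft : Finset.univ.filter (fun e => e = e0 ∧ e0 ∉ E') = {e0} := by
          ext e; simp [h]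
        rw [hft]
        simp [h]
  have hAR : A.map (Rat.cast : ℚ → ℝ) = fun k e =>
    Sum.elim (fun v => if e ∈ E' ∧ v ∈ e then (1:ℝ) else 0)
      (fun e0 => if e = e0 ∧ e0 ∉ E' then 1 else 0) k := by
    funext k e
    rw [Matrix.map_apply]
    rcases k with v | e0 <;>
      simp [Matrix.map_apply, hA, apply_ite (Rat.cast : ℚ → ℝ)]
  have hzsol : (A.map (Rat.cast : ℚ → ℝ)).mulVec z = rcast b := by
    funext k
    rw [hAR]
    show ∑ e, _ * z e = _
    rw [key z k]
    rcases k with v | e0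
    · simpa [rcast, hb] using hsum v
    · simp only [Sum.elim_inr, rcast, hb, Rat.cast_zero]
      by_cases h : e0 ∈ E' <;> simp [h, h0]
  obtain ⟨y, hy, hynear⟩ := rat_solution_dense A b z hzsol hε
  have hyk : ∀ k, ∑ e, (Sum.elim (fun v => if e ∈ E' ∧ v ∈ e then (1:ℚ) else 0)
      (fun e0 => if e = e0 ∧ e0 ∉ E' then 1 else 0) k) * y e = b k := by
    intro k
    have := congrFun hy k
    simpa [Matrix.mulVec, dotProduct, hA] using this
  refine ⟨y, fun e he => ?_, fun v => ?_, hynear⟩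
  · have := (key y (Sum.inr e)).symm.trans (hyk (Sum.inr e))
    simpa [hb, he] using this
  · have := (key y (Sum.inl v)).symm.trans (hyk (Sum.inl v))
    simpa [hb] using this

section Scaling
variable {V : Type*} [Fintype V] [DecidableEq V]

lemma rat_scale {q : ℚ} (hq : 0 ≤ q) {N : ℕ} (hd : q.den ∣ N) :
    ((q.num * (N / q.den) : ℤ).toNat : ℚ) = q * N := by
  obtain ⟨m, hm⟩ := hd
  have hden : (q.den : ℚ) ≠ 0 := Nat.cast_ne_zero.2 q.den_nz
  have hdiv : ((N : ℤ) / (q.den : ℤ)) = (m : ℤ) := by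
    rw [hm]
    push_cast
    exact Int.mul_ediv_cancel_left _ (Int.natCast_ne_zero.2 q.den_nz)
  have hqd : q * (q.den : ℚ) = (q.num : ℚ) := by
    nth_rewrite 1 [← Rat.num_div_den q]
    exact div_mul_cancel₀ _ hden
  have hnn : (0 : ℤ) ≤ q.num * m := mul_nonneg (Rat.num_nonneg.2 hq) (Int.natCast_nonneg m)
  rw [hdiv]
  have h2 : (((q.num * (m:ℤ)).toNat : ℤ)) = q.num * (m:ℤ) := Int.toNat_of_nonneg hnn
  have hc : ((q.num * (m:ℤ)).toNat : ℚ) = ((q.num * (m:ℤ) : ℤ) : ℚ) := by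
    exact_mod_cast congrArg (fun z : ℤ => (z : ℚ)) h2
  rw [hc]
  push_cast [hm]
  rw [← mul_assoc, hqd]

/-- From a nonnegative rational point of `P_{E'}` we get an integral magic labeling. -/
lemma exists_magic_of_rat (E' : Finset (Sym2 V)) (y : Sym2 V → ℚ) (h0 : ∀ e ∉ E', y e = 0)
    (hnn : ∀ e, 0 ≤ y e) (hsum : ∀ v : V, ∑ e ∈ E' with v ∈ e, y e = 1) :
    ∃ L r, IsMagic E' L r ∧ ∀ e ∈ E', 0 < y e → 0 < L e := by
  classical
  set N : ℕ := ∏ e ∈ E', (y e).den with hN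
  set L : Sym2 V → ℕ := fun e => (((y e).num * (N / (y e).den) : ℤ)).toNat with hL
  have hcast : ∀ e ∈ E', (L e : ℚ) = y e * N := by
    intro e he
    exact rat_scale (hnn e) (Finset.dvd_prod_of_mem _ he)
  have hzero : ∀ e ∉ E', L e = 0 := by
    intro e he
    have : (y e).num = 0 := by rw [h0 e he]; rfl
    simp [hL, this]
  refine ⟨L, N, ⟨hzero, fun v => ?_⟩, fun e he hy => ?_⟩
  · have : ((∑ e ∈ E' with v ∈ e, L e : ℕ) : ℚ) = ((N : ℕ) : ℚ) := by
      push_cast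
      rw [Finset.sum_congr rfl (fun e hef => hcast e (Finset.mem_filter.1 hef).1),
        ← Finset.sum_mul, hsum v, one_mul]
    exact_mod_cast this
  · have hNpos : 0 < N := Finset.prod_pos fun e _ => (y e).pos
    have : (0 : ℚ) < (L e : ℚ) := by
      rw [hcast e he]
      positivity
    exact_mod_cast this

/-- A point of `P_{E'}` positive on all of `E'` yields positivity of `E'`. -/
lemma isPositive_of_point {E' : Finset (Sym2 V)} {z : Sym2 V → ℝ} (hz : z ∈ PG E')
    (hpos : ∀ e ∈ E', 0 < z e) : IsPositive E' := by
  classical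
  rcases Finset.eq_empty_or_nonempty E' with rfl | hEne
  · intro e he; simp at he
  obtain ⟨h0, hnn, hsum⟩ := hz
  set ε : ℝ := E'.inf' hEne z with hε
  have hεpos : 0 < ε := by
    rw [hε, Finset.lt_inf'_iff]
    exact fun e he => hpos e he
  obtain ⟨y, hy0, hysum, hynear⟩ := exists_rat_near_pg E' h0 hsum hεpos
  have hypos : ∀ e ∈ E', 0 < y e := by
    intro e he
    have h1 : |(y e : ℝ) - z e| < ε := hynear e
    have h2 : ε ≤ z e := Finset.inf'_le _ he
    have : (0 : ℝ) < (y e : ℝ) := by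
      rw [abs_sub_lt_iff] at h1
      linarith [h1.2]
    exact_mod_cast this
  have hynn : ∀ e, 0 ≤ y e := by
    intro e
    by_cases he : e ∈ E'
    · exact (hypos e he).le
    · rw [hy0 e he]
  obtain ⟨L, r, hmagic, hLpos⟩ := exists_magic_of_rat E' y hy0 hynn hysum
  exact fun e he => ⟨L, r, hmagic, hLpos e he (hypos e he)⟩

end Scaling

section Dim
open scoped Classical

variable (E E' : Finset (Sym2 V))

/-- the bipartite components -/
abbrev BipComp (E : Finset (Sym2 V)) :=
  {C : (compGraph E).ConnectedComponent //
    ∃ c : V → Bool, ∀ u v : V, s(u, v) ∈ E →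
      (compGraph E).connectedComponentMk u = C → c u ≠ c v}

noncomputable instance : Fintype (BipComp E) := Fintype.ofFinite _

/-- the coloring function of a bipartite component, as a `±1`-function -/
noncomputable def bcol (C : BipComp E) : V → ℝ :=
  fun v => if C.2.choose v then 1 else -1

lemma bcol_sq (C : BipComp E) (v : V) : bcol E C v * bcol E C v = 1 := by
  unfold bcol; split <;> norm_num

lemma bcol_add_bcol {C : BipComp E} {a b : V} (hab : s(a, b) ∈ E)
    (ha : (compGraph E).connectedComponentMk a = C.1) : bcol E C a + bcol E C b = 0 := by
  have := C.2.choose_spec a b hab ha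
  unfold bcol
  rcases Bool.eq_false_or_eq_true (C.2.choose a) with h | h <;>
    rcases Bool.eq_false_or_eq_true (C.2.choose b) with h' | h' <;>
      simp [h, h'] at this ⊢

lemma same_comp {a b : V} (hab : s(a, b) ∈ E) (hne : a ≠ b) :
    (compGraph E).connectedComponentMk a = (compGraph E).connectedComponentMk b := by
  have hadj : (compGraph E).Adj a b := by
    simp only [compGraph, SimpleGraph.fromRel_adj]
    exact ⟨hne, Or.inl hab⟩
  exact SimpleGraph.ConnectedComponent.connectedComponentMk_eq_of_adj hadj

lemma not_loop_bip {a : V} (haa : s(a, a) ∈ E) (C : BipComp E) :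
    (compGraph E).connectedComponentMk a ≠ C.1 := by
  intro h
  exact C.2.choose_spec a a haa h rfl

/-- Key combinatorial fact: the signed count of endpoints of an edge inside a
bipartite component is zero. -/
lemma signed_sum_zero (C : BipComp E) {e : Sym2 V} (he : e ∈ E) :
    ∑ v ∈ univ.filter (fun v => (compGraph E).connectedComponentMk v = C.1),
      (if v ∈ e then bcol E C v else 0) = 0 := by
  obtain ⟨a, b⟩ := e
  by_cases hab : a = b
  · subst hab
    refine Finset.sum_eq_zero fun v hv => ?_
    rw [Finset.mem_filter] at hv
    rw [if_neg]
    intro hve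
    rw [Sym2.mem_iff] at hve
    have : v = a := by tauto
    subst this
    exact not_loop_bip E he C hv.2
  · by_cases ha : (compGraph E).connectedComponentMk a = C.1
    · have hb : (compGraph E).connectedComponentMk b = C.1 :=
        (same_comp E he hab).symm.trans ha
      have hfilter : univ.filter (fun v => (compGraph E).connectedComponentMk v = C.1 ∧
          v ∈ s(a, b)) = {a, b} := by
        ext v
        simp only [Finset.mem_filter, Finset.mem_univ, true_and, Sym2.mem_iff,
          Finset.mem_insert, Finset.mem_singleton]
        constructor
        · rintro ⟨_, h⟩; exact h
        · rintro (rfl | rfl)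
          · exact ⟨ha, Or.inl rfl⟩
          · exact ⟨hb, Or.inr rfl⟩
      rw [← Finset.sum_filter, Finset.filter_filter, hfilter, Finset.sum_pair hab]
      exact bcol_add_bcol E he ha
    · refine Finset.sum_eq_zero fun v hv => ?_
      rw [Finset.mem_filter] at hv
      rw [if_neg]
      intro hve
      rw [Sym2.mem_iff] at hve
      rcases hve with rfl | rfl
      · exact ha hv.2
      · exact ha ((same_comp E he hab).trans hv.2)

end Dim

section Dim2
open scoped Classical
variable (E E' : Finset (Sym2 V))

/-- The vertex-sum linear map. -/
noncomputable def phiMap : (Sym2 V → ℝ) →ₗ[ℝ] (V → ℝ) where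
  toFun y := fun v => ∑ e ∈ E' with v ∈ e, y e
  map_add' y₁ y₂ := by funext v; simp [Finset.sum_add_distrib]
  map_smul' c y := by funext v; simp [Finset.mul_sum]

/-- The signed component-sum linear map. -/
noncomputable def psiMap : (V → ℝ) →ₗ[ℝ] (BipComp E → ℝ) where
  toFun g := fun C => ∑ v ∈ univ.filter
    (fun v => (compGraph E).connectedComponentMk v = C.1), bcol E C v * g v
  map_add' g₁ g₂ := by funext C; simp [Finset.sum_add_distrib, mul_add]
  map_smul' c g := by
    funext C
    simp only [Pi.smul_apply, smul_eq_mul, RingHom.id_apply, Finset.mul_sum]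
    exact Finset.sum_congr rfl fun v _ => by ring

/-- number of vertices in a component -/
noncomputable def compCard (C : BipComp E) : ℕ :=
  (univ.filter (fun v => (compGraph E).connectedComponentMk v = C.1)).card

lemma compCard_pos (C : BipComp E) : 0 < compCard E C := by
  obtain ⟨w, hw⟩ := C.1.exists_rep
  refine Finset.card_pos.2 ⟨w, ?_⟩
  simp only [compCard, Finset.mem_filter, Finset.mem_univ, true_and]
  exact hw

/-- indicator-type functions hitting each bipartite component -/
noncomputable def gC (C : BipComp E) : V → ℝ :=
  fun v => if (compGraph E).connectedComponentMk v = C.1 then bcol E C v else 0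

lemma psiMap_gC (C C' : BipComp E) :
    psiMap E (gC E C) C' = if C' = C then (compCard E C : ℝ) else 0 := by
  by_cases h : C' = C
  · subst h
    simp only [psiMap, LinearMap.coe_mk, AddHom.coe_mk, if_pos rfl]
    rw [show (compCard E C' : ℝ) = ∑ v ∈ univ.filter
        (fun v => (compGraph E).connectedComponentMk v = C'.1), (1:ℝ) by
      simp [compCard]]
    refine Finset.sum_congr rfl fun v hv => ?_
    rw [Finset.mem_filter] at hv
    rw [gC, if_pos hv.2, bcol_sq]
  · rw [if_neg h]
    simp only [psiMap, LinearMap.coe_mk, AddHom.coe_mk]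
    refine Finset.sum_eq_zero fun v hv => ?_
    rw [Finset.mem_filter] at hv
    have : (compGraph E).connectedComponentMk v ≠ C.1 := by
      rw [hv.2]
      intro hcc
      exact h (Subtype.ext hcc)
    rw [gC, if_neg this, mul_zero]

lemma psiMap_surjective : Function.Surjective (psiMap E) := by
  intro h
  refine ⟨∑ C, (h C / (compCard E C : ℝ)) • gC E C, ?_⟩
  funext C'
  rw [map_sum]
  simp only [Finset.sum_apply, LinearMap.map_smul, Pi.smul_apply, smul_eq_mul, psiMap_gC]
  rw [Finset.sum_eq_single C' (fun C _ hne => by rw [if_neg (Ne.symm hne), mul_zero])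
    (fun habs => absurd (Finset.mem_univ C') habs)]
  rw [if_pos rfl, div_mul_cancel₀]
  exact Nat.cast_ne_zero.2 (compCard_pos E C').ne'

lemma finrank_ker_psiMap :
    finrank ℝ (LinearMap.ker (psiMap E)) + numBipComp E = Fintype.card V := by
  have h1 := LinearMap.finrank_range_add_finrank_ker (psiMap E)
  have h2 : finrank ℝ (LinearMap.range (psiMap E)) = Fintype.card (BipComp E) := by
    have ht : LinearMap.range (psiMap E) = ⊤ := LinearMap.range_eq_top.2 (psiMap_surjective E)
    rw [ht, finrank_top, finrank_fintype_fun_eq_card]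
  rw [h2, finrank_fintype_fun_eq_card] at h1
  have h3 : numBipComp E = Fintype.card (BipComp E) := Nat.card_eq_fintype_card
  omega

/-- The range of `phiMap` on functions supported on `E' ⊆ E` is killed by `psiMap`. -/
lemma phi_mem_ker_psi (hsub : E' ⊆ E) {y : Sym2 V → ℝ} (h0 : ∀ e ∉ E', y e = 0) :
    phiMap E' y ∈ LinearMap.ker (psiMap E) := by
  rw [LinearMap.mem_ker]
  funext C
  simp only [psiMap, phiMap, LinearMap.coe_mk, AddHom.coe_mk, Pi.zero_apply]
  have swap : ∑ v ∈ univ.filter (fun v => (compGraph E).connectedComponentMk v = C.1),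
      bcol E C v * ∑ e ∈ E' with v ∈ e, y e
      = ∑ e ∈ E', (∑ v ∈ univ.filter
          (fun v => (compGraph E).connectedComponentMk v = C.1),
          (if v ∈ e then bcol E C v else 0)) * y e := by
    calc ∑ v ∈ univ.filter (fun v => (compGraph E).connectedComponentMk v = C.1),
        bcol E C v * ∑ e ∈ E' with v ∈ e, y e
        = ∑ v ∈ univ.filter (fun v => (compGraph E).connectedComponentMk v = C.1),
          ∑ e ∈ E', (if v ∈ e then bcol E C v * y e else 0) := by
          refine Finset.sum_congr rfl fun v _ => ?_
          rw [Finset.sum_filter, Finset.mul_sum]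
          exact Finset.sum_congr rfl fun e _ => by rw [mul_ite, mul_zero]
      _ = ∑ e ∈ E', ∑ v ∈ univ.filter
            (fun v => (compGraph E).connectedComponentMk v = C.1),
            (if v ∈ e then bcol E C v * y e else 0) := Finset.sum_comm
      _ = ∑ e ∈ E', (∑ v ∈ univ.filter
            (fun v => (compGraph E).connectedComponentMk v = C.1),
            (if v ∈ e then bcol E C v else 0)) * y e := by
          refine Finset.sum_congr rfl fun e _ => ?_
          rw [Finset.sum_mul]
          exact Finset.sum_congr rfl fun v _ => by rw [ite_mul, zero_mul]
  rw [swap]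
  refine Finset.sum_eq_zero fun e he => ?_
  rw [signed_sum_zero E C (hsub he), zero_mul]

end Dim2

section Dim3
open scoped Classical
variable (E E' : Finset (Sym2 V))

/-- functions supported on `E'` -/
noncomputable def Wsub : Submodule ℝ (Sym2 V → ℝ) where
  carrier := {y | ∀ e ∉ E', y e = 0}
  add_mem' := by intro a b ha hb e he; simp [ha e he, hb e he]
  zero_mem' := by intro e _; rfl
  smul_mem' := by intro c a ha e he; simp [ha e he]

noncomputable def WEquiv : (Wsub (V := V) E') ≃ₗ[ℝ] ({e // e ∈ E'} → ℝ) where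
  toFun y := fun e => y.1 e.1
  map_add' y₁ y₂ := rfl
  map_smul' c y := rfl
  invFun g := ⟨fun e => if h : e ∈ E' then g ⟨e, h⟩ else 0, by
    intro e he; simp [he]⟩
  left_inv := by
    rintro ⟨y, hy⟩
    ext e
    by_cases he : e ∈ E' <;> simp [he, hy e]
  right_inv := by
    intro g
    funext e
    simp [e.2]

lemma finrank_Wsub : finrank ℝ (Wsub (V := V) E') = E'.card := by
  rw [LinearEquiv.finrank_eq (WEquiv E'), finrank_fintype_fun_eq_card, Fintype.card_coe]

/-- Main dimension bound. -/
lemma card_add_bip_le (hsub : E' ⊆ E) {z : Sym2 V → ℝ} (hz : z ∈ PG E')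
    (hzpos : ∀ e ∈ E', 0 < z e) :
    E'.card + numBipComp E ≤ Fintype.card V
      + finrank ℝ (affineSpan ℝ (PG E')).direction := by
  set ψ : (Wsub (V := V) E') →ₗ[ℝ] (V → ℝ) :=
    (phiMap E').comp (Wsub E').subtype with hψ
  -- rank-nullity for ψ
  have eq1 : finrank ℝ (LinearMap.range ψ) + finrank ℝ (LinearMap.ker ψ) = E'.card := by
    rw [LinearMap.finrank_range_add_finrank_ker ψ, finrank_Wsub]
  -- range ψ ≤ ker (psiMap E)
  have le3 : finrank ℝ (LinearMap.range ψ) ≤ finrank ℝ (LinearMap.ker (psiMap E)) := by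
    refine Submodule.finrank_mono ?_
    rintro _ ⟨⟨y, hy⟩, rfl⟩
    exact phi_mem_ker_psi E E' hsub (y := y) hy
  -- kernel of ψ embeds in the direction of the affine span
  have le2 : finrank ℝ (LinearMap.ker ψ) ≤ finrank ℝ (affineSpan ℝ (PG E')).direction := by
    rw [← Submodule.finrank_map_subtype_eq (Wsub (V := V) E') (LinearMap.ker ψ)]
    refine Submodule.finrank_mono ?_
    rintro _ ⟨⟨y, hy⟩, hker, rfl⟩
    -- y is supported on E' and has vanishing vertex sums
    have hysum : ∀ v : V, ∑ e ∈ E' with v ∈ e, y e = 0 := by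
      intro v
      have := congrFun (LinearMap.mem_ker.1 hker) v
      simpa [hψ, phiMap] using this
    -- choose a small ε
    rcases Finset.eq_empty_or_nonempty E' with hE | hE
    · have hy0 : y = 0 := by
        funext e
        exact hy e (by simp [hE])
      simp only [Submodule.coe_subtype, hy0]
      exact Submodule.zero_mem _
    set ε : ℝ := E'.inf' hE (fun e => z e / (|y e| + 1)) with hεdef
    have hεpos : 0 < ε := by
      rw [hεdef, Finset.lt_inf'_iff]
      intro e he
      exact div_pos (hzpos e he) (by positivity)
    have hmem : z + ε • y ∈ PG E' := by
      obtain ⟨hz0, hznn, hzsum⟩ := hz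
      refine ⟨fun e he => by simp [hz0 e he, hy e he], fun e => ?_, fun v => ?_⟩
      · by_cases he : e ∈ E'
        · have hle : ε ≤ z e / (|y e| + 1) := Finset.inf'_le _ he
          have h1 : ε * |y e| ≤ z e / (|y e| + 1) * |y e| :=
            mul_le_mul_of_nonneg_right hle (abs_nonneg _)
          have h2 : z e / (|y e| + 1) * |y e| < z e := by
            rw [div_mul_eq_mul_div, div_lt_iff₀ (by positivity)]
            nlinarith [hzpos e he, abs_nonneg (y e)]
          have h3 : -(ε * y e) ≤ ε * |y e| := by
            rw [← mul_neg]
            exact mul_le_mul_of_nonneg_left (neg_le_abs _) hεpos.le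
          simp only [Pi.add_apply, Pi.smul_apply, smul_eq_mul]
          linarith
        · simp [hz0 e he, hy e he]
      · simp only [Pi.add_apply, Pi.smul_apply, smul_eq_mul]
        rw [Finset.sum_add_distrib, hzsum v, ← Finset.mul_sum, hysum v, mul_zero, add_zero]
    have h1 : z + ε • y ∈ affineSpan ℝ (PG E') := subset_affineSpan ℝ _ hmem
    have h2 : z ∈ affineSpan ℝ (PG E') := subset_affineSpan ℝ _ hz
    have h3 : (z + ε • y) -ᵥ z ∈ (affineSpan ℝ (PG E')).direction :=
      AffineSubspace.vsub_mem_direction h1 h2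
    have h4 : (z + ε • y) -ᵥ z = ε • y := by
      simp [vsub_eq_sub]
    rw [h4] at h3
    have h5 := Submodule.smul_mem _ (ε⁻¹) h3
    rw [smul_smul, inv_mul_cancel₀ hεpos.ne', one_smul] at h5
    simpa using h5
  have eq4 := finrank_ker_psiMap E
  omega

end Dim3

section Faces
open scoped Classical
variable (E : Finset (Sym2 V))

lemma exists_point_pos (hpos : IsPositive E) {e : Sym2 V} (he : e ∈ E) :
    ∃ x ∈ PG E, 0 < x e := by
  obtain ⟨L, r, ⟨h0, hsum⟩, hLe⟩ := hpos e he
  have hr : 0 < r := by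
    obtain ⟨a, b⟩ := e
    have hmem : s(a, b) ∈ E.filter (fun e' => a ∈ e') := by
      simp [Finset.mem_filter, he]
    calc 0 < L s(a, b) := hLe
      _ ≤ ∑ e' ∈ E with a ∈ e', L e' := Finset.single_le_sum (fun _ _ => Nat.zero_le _) hmem
      _ = r := hsum a
  refine ⟨fun e' => (L e' : ℝ) / r, ⟨fun e' he' => by simp [h0 e' he'], fun e' => by positivity,
    fun v => ?_⟩, by positivity⟩
  rw [← Finset.sum_div]
  rw [show ∑ e' ∈ E with v ∈ e', (L e' : ℝ) = ((∑ e' ∈ E with v ∈ e', L e' : ℕ) : ℝ) by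
    push_cast; rfl]
  rw [hsum v, div_self (by exact_mod_cast hr.ne')]

lemma PG_nonempty (hpos : IsPositive E) (hne : E.Nonempty) : (PG E).Nonempty := by
  obtain ⟨e, he⟩ := hne
  obtain ⟨x, hx, _⟩ := exists_point_pos E hpos he
  exact ⟨x, hx⟩

/-- In a nonempty convex subset of `PG E` there is a point positive on all edges
that are positive somewhere on the set. -/
lemma exists_pos_point_s6 {F : Set (Sym2 V → ℝ)} (hF : F ⊆ PG E) (hconv : Convex ℝ F)
    (hFne : F.Nonempty) :
    ∃ z ∈ F, ∀ e ∈ E.filter (fun e => ∃ x ∈ F, 0 < x e), 0 < z e := by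
  classical
  set E'' := E.filter (fun e => ∃ x ∈ F, 0 < x e) with hE''
  rcases Finset.eq_empty_or_nonempty E'' with hemp | hne
  · obtain ⟨z, hz⟩ := hFne
    exact ⟨z, hz, fun e he => by rw [hemp] at he; simp at he⟩
  have hwit : ∀ e ∈ E'', ∃ x ∈ F, 0 < x e := by
    intro e he
    rw [hE'', Finset.mem_filter] at he
    exact he.2
  choose w hwF hwpos using hwit
  set k := E''.card with hk
  have hkpos : 0 < (k : ℝ) := by exact_mod_cast Finset.card_pos.2 hne
  set z := ∑ e ∈ E''.attach, ((k : ℝ)⁻¹) • w e.1 e.2 with hz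
  have hzF : z ∈ F := by
    refine hconv.sum_mem (fun _ _ => by positivity) ?_ (fun e _ => hwF e.1 e.2)
    rw [Finset.sum_const, Finset.card_attach, ← hk, nsmul_eq_mul, mul_inv_cancel₀ hkpos.ne']
  refine ⟨z, hzF, fun e he => ?_⟩
  have : z e = ∑ e' ∈ E''.attach, (k : ℝ)⁻¹ * w e'.1 e'.2 e := by
    rw [hz]
    simp [Finset.sum_apply]
  rw [this]
  refine Finset.sum_pos' (fun e' _ => ?_) ⟨⟨e, he⟩, Finset.mem_attach _ _, ?_⟩
  · have := (hF (hwF e'.1 e'.2)).2.1 e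
    positivity
  · have := hwpos e he
    positivity

end Faces

section Faces2
open scoped Classical
variable (E : Finset (Sym2 V))

lemma sum_eq_sum_subset' {α : Type*} [AddCommMonoid α] {E' E : Finset (Sym2 V)} (hsub : E' ⊆ E)
    {x : Sym2 V → α} (h0 : ∀ e ∉ E', x e = 0) (v : V) :
    ∑ e ∈ E with v ∈ e, x e = ∑ e ∈ E' with v ∈ e, x e := by
  refine (Finset.sum_subset (Finset.filter_subset_filter _ hsub) ?_).symm
  intro e he hne
  refine h0 e fun he' => hne ?_
  simp only [Finset.mem_filter] at he ⊢
  exact ⟨he', he.2⟩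

lemma PG_subset' {E' E : Finset (Sym2 V)} (hsub : E' ⊆ E) : PG E' ⊆ PG E := by
  rintro x ⟨h0, hnn, hsum⟩
  exact ⟨fun e he => h0 e fun he' => he (hsub he'), hnn,
    fun v => (sum_eq_sum_subset' hsub (fun e he => h0 e he) v).trans (hsum v)⟩

lemma mem_PG_of_zero {E' E : Finset (Sym2 V)} (hsub : E' ⊆ E) {x : Sym2 V → ℝ}
    (hx : x ∈ PG E) (h0 : ∀ e ∉ E', x e = 0) : x ∈ PG E' :=
  ⟨h0, hx.2.1, fun v => (sum_eq_sum_subset' hsub h0 v).symm.trans (hx.2.2 v)⟩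

lemma PG_le_one' {E : Finset (Sym2 V)} {x : Sym2 V → ℝ} (hx : x ∈ PG E) {e : Sym2 V}
    (he : e ∈ E) : x e ≤ 1 := by
  obtain ⟨h0, hnn, hsum⟩ := hx
  obtain ⟨a, b⟩ := e
  have hmem : s(a, b) ∈ E.filter (fun e => a ∈ e) := by
    simp [Finset.mem_filter, he, Sym2.mem_iff]
  calc x s(a,b) ≤ ∑ e ∈ E with a ∈ e, x e :=
        Finset.single_le_sum (fun e _ => hnn e) hmem
    _ = 1 := hsum a

/-- If every edge of `E` is positive somewhere on `PG E`, the filtered edge set is `E`. -/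
lemma PG_convex' (E : Finset (Sym2 V)) : Convex ℝ (PG E) := by
  rintro x ⟨hx0, hxnn, hxs⟩ y ⟨hy0, hynn, hys⟩ a b ha hb hab
  refine ⟨fun e he => by simp [hx0 e he, hy0 e he], fun e => by
    have := hxnn e; have := hynn e
    simp only [Pi.add_apply, Pi.smul_apply, smul_eq_mul]
    nlinarith, fun v => ?_⟩
  simp only [Pi.add_apply, Pi.smul_apply, smul_eq_mul]
  rw [Finset.sum_add_distrib, ← Finset.mul_sum, ← Finset.mul_sum, hxs v, hys v]
  linarith

lemma filter_pos_eq (hpos : IsPositive E) :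
    E.filter (fun e => ∃ x ∈ PG E, 0 < x e) = E :=
  Finset.filter_eq_self.2 fun e he => exists_point_pos E hpos he

/-- The support-face identity: a supported hyperplane section of `PG E` equals `PG E''`
where `E''` is the set of edges positive somewhere on the face. -/
lemma face_eq_PG (c : (Sym2 V → ℝ) →ₗ[ℝ] ℝ) (δ : ℝ) (hsupp : ∀ x ∈ PG E, c x ≤ δ)
    (hmax : ∃ x ∈ PG E, c x = δ) :
    {x ∈ PG E | c x = δ}
      = PG (E.filter (fun e => ∃ x ∈ {x ∈ PG E | c x = δ}, 0 < x e)) := by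
  set F := {x ∈ PG E | c x = δ} with hF
  set E'' := E.filter (fun e => ∃ x ∈ F, 0 < x e) with hE''
  have hsub : E'' ⊆ E := Finset.filter_subset _ _
  have hFsub : F ⊆ PG E := fun x hx => hx.1
  have hFne : F.Nonempty := by
    obtain ⟨x, hx, hcx⟩ := hmax
    exact ⟨x, hx, hcx⟩
  have hFconv : Convex ℝ F := by
    rintro x ⟨hxP, hxc⟩ y ⟨hyP, hyc⟩ a b ha hb hab
    refine ⟨PG_convex' E hxP hyP ha hb hab, ?_⟩
    simp only [map_add, _root_.map_smul, smul_eq_mul, hxc, hyc]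
    rw [← add_mul, hab, one_mul]
  -- zero off E'' for members of F
  have hFzero : ∀ x ∈ F, ∀ e ∉ E'', x e = 0 := by
    intro x hx e he
    by_cases heE : e ∈ E
    · by_contra hne
      have hpos : 0 < x e := lt_of_le_of_ne ((hFsub hx).2.1 e) (Ne.symm hne)
      exact he (Finset.mem_filter.2 ⟨heE, ⟨x, hx, hpos⟩⟩)
    · exact (hFsub hx).1 e heE
  -- a point of F positive on all of E''
  obtain ⟨z, hzF, hzpos⟩ := exists_pos_point_s6 E hFsub hFconv hFne
  ext y
  constructor
  · intro hy
    exact mem_PG_of_zero hsub (hFsub hy) (hFzero y hy)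
  · intro hy
    have hyE : y ∈ PG E := PG_subset' hsub hy
    have hcy : c y = δ := by
      rcases Finset.eq_empty_or_nonempty E'' with hemp | hne''
      · -- E'' empty: then F and PG E'' both degenerate; y = z
        have hyz : y = z := by
          funext e
          rw [hy.1 e (by rw [hemp]; simp), hFzero z hzF e (by rw [hemp]; simp)]
        rw [hyz]
        exact hzF.2
      set m := E''.inf' hne'' z with hm
      have hmpos : 0 < m := by
        rw [hm, Finset.lt_inf'_iff]
        exact fun e he => hzpos e he
      -- the stretched point w = z + m (z - y)
      set w := z + m • (z - y) with hw
      have hwP : w ∈ PG E := by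
        have hzP := hFsub hzF
        refine ⟨fun e he => ?_, fun e => ?_, fun v => ?_⟩
        · have h1 : z e = 0 := hzP.1 e he
          have h2 : y e = 0 := hyE.1 e he
          simp [hw, h1, h2]
        · by_cases he : e ∈ E''
          · have h1 : m ≤ z e := Finset.inf'_le _ he
            have h2 : y e ≤ 1 := PG_le_one' hy he
            have h3 : 0 ≤ y e := hy.2.1 e
            simp only [hw, Pi.add_apply, Pi.smul_apply, Pi.sub_apply, smul_eq_mul]
            nlinarith
          · have h1 : z e = 0 := hFzero z hzF e he
            have h2 : y e = 0 := by
              by_cases heE : e ∈ E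
              · exact hy.1 e fun he' => he he'
              · exact hyE.1 e heE
            simp [hw, h1, h2]
        · have hzP := hFsub hzF
          simp only [hw, Pi.add_apply, Pi.smul_apply, Pi.sub_apply, smul_eq_mul]
          rw [Finset.sum_add_distrib, hzP.2.2 v, ← Finset.mul_sum]
          rw [Finset.sum_sub_distrib, hzP.2.2 v, hyE.2.2 v]
          ring
      have hcw : c w ≤ δ := hsupp w hwP
      have hcz : c z = δ := hzF.2
      have hcyδ : c y ≤ δ := hsupp y hyE
      have hexp : c w = c z + m * (c z - c y) := by
        rw [hw]
        simp [map_add, _root_.map_smul, map_sub, smul_eq_mul]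
      rw [hexp, hcz] at hcw
      nlinarith
    exact ⟨hyE, hcy⟩

/-- Backward direction: `PG E'` is a face of `PG E`. -/
lemma PG_isFaceOf {E' : Finset (Sym2 V)} (hsub : E' ⊆ E) (hne : (PG E').Nonempty) :
    IsFaceOf (PG E') (PG E) := by
  by_cases heq : E' = E
  · exact Or.inl (by rw [heq])
  obtain ⟨e0, he0E, he0⟩ : ∃ e0 ∈ E, e0 ∉ E' := by
    by_contra h
    push_neg at h
    exact heq (Finset.Subset.antisymm hsub h)
  set c : (Sym2 V → ℝ) →ₗ[ℝ] ℝ := -∑ e ∈ E \ E', LinearMap.proj e with hc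
  have hcx : ∀ x : Sym2 V → ℝ, c x = -∑ e ∈ E \ E', x e := by
    intro x
    simp [hc, LinearMap.proj]
  refine Or.inr ⟨c, 0, ?_, ?_, ?_, ?_⟩
  · intro h0
    have hc0 : c (Pi.single e0 1) = 0 := by rw [h0]; rfl
    rw [hcx] at hc0
    have hmem : e0 ∈ E \ E' := Finset.mem_sdiff.2 ⟨he0E, he0⟩
    have hs : ∑ e ∈ E \ E', Pi.single e0 (1:ℝ) e = 1 := by
      rw [Finset.sum_eq_single e0 (fun e _ hne => Pi.single_eq_of_ne hne 1)
        (fun h => absurd hmem h)]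
      exact Pi.single_eq_same e0 1
    rw [hs] at hc0
    norm_num at hc0
  · intro x hx
    rw [hcx]
    simp only [neg_nonpos]
    exact Finset.sum_nonneg fun e _ => hx.2.1 e
  · obtain ⟨x, hx⟩ := hne
    refine ⟨x, PG_subset' hsub hx, ?_⟩
    rw [hcx]
    have : ∀ e ∈ E \ E', x e = 0 := fun e he => hx.1 e (Finset.mem_sdiff.1 he).2
    rw [Finset.sum_eq_zero this, neg_zero]
  · ext x
    constructor
    · intro hx
      refine ⟨PG_subset' hsub hx, ?_⟩
      rw [hcx]
      have : ∀ e ∈ E \ E', x e = 0 := fun e he => hx.1 e (Finset.mem_sdiff.1 he).2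
      rw [Finset.sum_eq_zero this, neg_zero]
    · rintro ⟨hxP, hxc⟩
      rw [hcx, neg_eq_zero] at hxc
      have hzero : ∀ e ∈ E \ E', x e = 0 := by
        intro e he
        exact (Finset.sum_eq_zero_iff_of_nonneg (fun e' _ => hxP.2.1 e')).1 hxc e he
      refine mem_PG_of_zero hsub hxP ?_
      intro e he
      by_cases heE : e ∈ E
      · exact hzero e (Finset.mem_sdiff.2 ⟨heE, he⟩)
      · exact hxP.1 e heE

end Faces2

/-- Let `G` be a finite positive graph with `n` vertices, `q` edges, at least one edge
and `b` bipartite connected components.  The `d`-dimensional faces of `P_G` are exactly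
the `d`-dimensional (nonempty) polytopes `P_H` of magic labelings of positive subgraphs
`H` of `G` on the same vertices with at most `n - b + d` edges (stated additively as
`|E'| + b ≤ n + d`), where `P_H` is embedded in `P_G` by labeling the edges of `G` not
in `H` with zero. -/
theorem PG_faces (E : Finset (Sym2 V)) (hpos : IsPositive E) (hne : E.Nonempty)
    (d : ℕ) (F : Set (Sym2 V → ℝ)) :
    (IsFaceOf F (PG E) ∧ Module.finrank ℝ (affineSpan ℝ F).direction = d) ↔
    (∃ E' ⊆ E, IsPositive E' ∧ E'.card + numBipComp E ≤ Fintype.card V + d ∧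
      (PG E').Nonempty ∧ Module.finrank ℝ (affineSpan ℝ (PG E')).direction = d ∧
      F = PG E') := by
  classical
  constructor
  · rintro ⟨hface, hdim⟩
    rcases hface with rfl | ⟨c, δ, hc0, hsupp, hmax, hFeq⟩
    · -- the face is all of `PG E`
      obtain ⟨z, hzF, hzpos⟩ := exists_pos_point_s6 E (subset_refl (PG E)) (PG_convex E)
        (PG_nonempty E hpos hne)
      rw [filter_pos_eq E hpos] at hzpos
      refine ⟨E, subset_refl E, hpos, ?_, PG_nonempty E hpos hne, hdim, rfl⟩
      have hb := card_add_bip_le E E (subset_refl E) hzF hzpos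
      rw [hdim] at hb
      exact hb
    · subst hFeq
      set E'' := E.filter (fun e => ∃ x ∈ {x ∈ PG E | c x = δ}, 0 < x e) with hE''
      have hfaceeq : {x ∈ PG E | c x = δ} = PG E'' := face_eq_PG E c δ hsupp hmax
      have hsub'' : E'' ⊆ E := Finset.filter_subset _ _
      have hFsub : {x ∈ PG E | c x = δ} ⊆ PG E := fun x hx => hx.1
      have hFne : ({x ∈ PG E | c x = δ}).Nonempty := by
        obtain ⟨x, hx, hcx⟩ := hmax
        exact ⟨x, hx, hcx⟩
      have hFconv : Convex ℝ {x ∈ PG E | c x = δ} := by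
        rintro x ⟨hxP, hxc⟩ y ⟨hyP, hyc⟩ a b ha hb hab
        refine ⟨PG_convex E hxP hyP ha hb hab, ?_⟩
        simp only [map_add, _root_.map_smul, smul_eq_mul, hxc, hyc]
        rw [← add_mul, hab, one_mul]
      obtain ⟨z, hzF, hzpos⟩ := exists_pos_point_s6 E hFsub hFconv hFne
      have hzP : z ∈ PG E'' := hfaceeq ▸ hzF
      rw [hfaceeq] at hdim
      refine ⟨E'', hsub'', isPositive_of_point hzP hzpos, ?_, ⟨z, hzP⟩, hdim, hfaceeq⟩
      have hb := card_add_bip_le E E'' hsub'' hzP hzpos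
      rw [hdim] at hb
      exact hb
  · rintro ⟨E', hsub, hposE', hcard, hne', hdim, rfl⟩
    exact ⟨PG_isFaceOf E hsub hne', hdim⟩
end PGlemmas
end

section
/- Let D be a digraph. Every magic labeling of D of magic sum r can be written as a sum of r magic labelings of D of magic sum 1. In particular, every irreducible magic labeling of D has magic sum 1. -/
open Finset

variable {V : Type*} [Fintype V] [DecidableEq V]

/-- A magic labeling of the digraph with vertex set `V` and edge set `E ⊆ V × V`,
of magic sum `r`. -/
def IsMagicD (E : Finset (V × V)) (L : V × V → ℕ) (r : ℕ) : Prop :=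
  (∀ e, e ∉ E → L e = 0) ∧ (∀ v : V, ∑ e ∈ E with e.1 = v, L e = r) ∧
    (∀ v : V, ∑ e ∈ E with e.2 = v, L e = r)

/-- `L` is a magic labeling (of some magic sum) of the digraph with edge set `E`. -/
def IsMagicLabelingD (E : Finset (V × V)) (L : V × V → ℕ) : Prop :=
  ∃ r : ℕ, IsMagicD E L r

/-- An irreducible magic labeling of a digraph: a nonzero magic labeling that is not
the sum of two nonzero magic labelings (sums taken edgewise). -/
def IsIrreducibleMagicD (E : Finset (V × V)) (L : V × V → ℕ) : Prop :=
  IsMagicLabelingD E L ∧ L ≠ 0 ∧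
    ∀ L₁ L₂ : V × V → ℕ, IsMagicLabelingD E L₁ → IsMagicLabelingD E L₂ →
      L₁ ≠ 0 → L₂ ≠ 0 → L ≠ L₁ + L₂

lemma magic_zero (E : Finset (V × V)) {L : V × V → ℕ} (h : IsMagicD E L 0) : L = 0 := by
  funext e
  by_cases he : e ∈ E
  · have h0 := h.2.1 e.1
    rw [Finset.sum_eq_zero_iff] at h0
    exact h0 e (Finset.mem_filter.2 ⟨he, rfl⟩)
  · exact h.1 e he

lemma magic_sum (E : Finset (V × V)) {m : ℕ} {g : Fin m → V × V → ℕ}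
    (hg : ∀ i, IsMagicD E (g i) 1) : IsMagicD E (∑ i, g i) m := by
  refine ⟨fun e he => ?_, fun v => ?_, fun v => ?_⟩
  · simp only [Finset.sum_apply]
    exact Finset.sum_eq_zero fun i _ => (hg i).1 e he
  · calc ∑ e ∈ E with e.1 = v, (∑ i, g i) e
        = ∑ e ∈ E with e.1 = v, ∑ i, g i e := by simp [Finset.sum_apply]
      _ = ∑ i, ∑ e ∈ E with e.1 = v, g i e := Finset.sum_comm
      _ = ∑ _i : Fin m, 1 := Finset.sum_congr rfl fun i _ => (hg i).2.1 v
      _ = m := by simp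
  · calc ∑ e ∈ E with e.2 = v, (∑ i, g i) e
        = ∑ e ∈ E with e.2 = v, ∑ i, g i e := by simp [Finset.sum_apply]
      _ = ∑ i, ∑ e ∈ E with e.2 = v, g i e := Finset.sum_comm
      _ = ∑ _i : Fin m, 1 := Finset.sum_congr rfl fun i _ => (hg i).2.2 v
      _ = m := by simp

lemma magic_ne_zero [Nonempty V] (E : Finset (V × V)) {L : V × V → ℕ} {m : ℕ} (hm : m ≠ 0)
    (h : IsMagicD E L m) : L ≠ 0 := by
  intro h0
  subst h0
  have := h.2.1 (Classical.arbitrary V)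
  simp only [Pi.zero_apply, Finset.sum_const_zero] at this
  exact hm this.symm

lemma exists_matching (E : Finset (V × V)) {L : V × V → ℕ} {r : ℕ} (h : IsMagicD E L (r + 1)) :
    ∃ f : V → V, Function.Bijective f ∧ ∀ v, (v, f v) ∈ E ∧ 1 ≤ L (v, f v) := by
  classical
  set t : V → Finset V := fun v => (E.filter fun e => e.1 = v ∧ 1 ≤ L e).image Prod.snd with ht
  have hall : ∀ s : Finset V, s.card ≤ (s.biUnion t).card := by
    intro s
    have key : s.card * (r + 1) ≤ (s.biUnion t).card * (r + 1) := by
      calc s.card * (r + 1) = ∑ v ∈ s, ∑ e ∈ E with e.1 = v, L e := by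
            rw [Finset.sum_congr rfl fun v _ => h.2.1 v]; simp [mul_comm]
        _ = ∑ e ∈ E, if e.1 ∈ s then L e else 0 := by
            simp only [Finset.sum_filter]
            rw [Finset.sum_comm]
            exact Finset.sum_congr rfl fun e _ => Finset.sum_ite_eq s e.1 fun _ => L e
        _ ≤ ∑ e ∈ E, if e.2 ∈ s.biUnion t then L e else 0 := by
            refine Finset.sum_le_sum fun e he => ?_
            by_cases h1 : e.1 ∈ s
            · by_cases h0 : 1 ≤ L e
              · have hmem : e.2 ∈ s.biUnion t :=
                  Finset.mem_biUnion.2 ⟨e.1, h1,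
                    Finset.mem_image.2 ⟨e, Finset.mem_filter.2 ⟨he, rfl, h0⟩, rfl⟩⟩
                simp [h1, hmem]
              · simp only [h1, if_true]; omega
            · simp [h1]
        _ = ∑ w ∈ s.biUnion t, ∑ e ∈ E with e.2 = w, L e := by
            simp only [Finset.sum_filter]
            rw [Finset.sum_comm]
            exact (Finset.sum_congr rfl fun e _ =>
              (Finset.sum_ite_eq (s.biUnion t) e.2 fun _ => L e)).symm
        _ = (s.biUnion t).card * (r + 1) := by
            rw [Finset.sum_congr rfl fun w _ => h.2.2 w]; simp [mul_comm]
    exact Nat.le_of_mul_le_mul_right key (Nat.succ_pos r)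
  obtain ⟨f, hinj, hf⟩ := (Finset.all_card_le_biUnion_card_iff_exists_injective t).1 hall
  refine ⟨f, Finite.injective_iff_bijective.1 hinj, fun v => ?_⟩
  obtain ⟨e, he, hee⟩ := Finset.mem_image.1 (hf v)
  obtain ⟨heE, h1, h2⟩ := Finset.mem_filter.1 he
  have hev : e = (v, f v) := Prod.ext h1 hee
  rw [← hev]
  exact ⟨heE, h2⟩

/-- Let `D` be a digraph.  Every magic labeling of `D` of magic sum `r` can be written
as a sum of `r` magic labelings of `D` of magic sum `1`; in particular, every
irreducible magic labeling of `D` has magic sum `1`. -/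
theorem digraph_magic_decomposition (E : Finset (V × V)) :
    (∀ (L : V × V → ℕ) (r : ℕ), IsMagicD E L r →
      ∃ f : Fin r → (V × V → ℕ), (∀ i, IsMagicD E (f i) 1) ∧ L = ∑ i, f i) ∧
    (∀ L : V × V → ℕ, IsIrreducibleMagicD E L → IsMagicD E L 1) := by
  classical
  have main : ∀ (r : ℕ) (L : V × V → ℕ), IsMagicD E L r →
      ∃ f : Fin r → (V × V → ℕ), (∀ i, IsMagicD E (f i) 1) ∧ L = ∑ i, f i := by
    intro r
    induction r with
    | zero =>
      intro L hL
      exact ⟨Fin.elim0, fun i => i.elim0, by simp [magic_zero E hL]⟩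
    | succ n ih =>
      intro L hL
      obtain ⟨f, hbij, hf⟩ := exists_matching E hL
      set M : V × V → ℕ := fun e => if e.2 = f e.1 then 1 else 0 with hM
      have hMle : ∀ e, M e ≤ L e := by
        intro e
        simp only [hM]
        split
        · next hcond =>
            have := (hf e.1).2
            rwa [show (e.1, f e.1) = e from Prod.ext rfl hcond.symm] at this
        · exact Nat.zero_le _
      have hMnot : ∀ e, e ∉ E → M e = 0 := by
        intro e he
        simp only [hM]
        split
        · next hcond =>
            have := (hf e.1).1
            rw [show (e.1, f e.1) = e from Prod.ext rfl hcond.symm] at this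
            exact absurd this he
        · rfl
      have hMout : ∀ v, ∑ e ∈ E with e.1 = v, M e = 1 := by
        intro v
        have hcg : ∀ e ∈ E.filter (fun e => e.1 = v), M e = if e = (v, f v) then 1 else 0 := by
          intro e he
          obtain ⟨heE, h1⟩ := Finset.mem_filter.1 he
          simp only [hM]
          by_cases hc : e.2 = f e.1
          · rw [if_pos hc, if_pos (Prod.ext h1 (by rw [hc, h1]))]
          · rw [if_neg hc, if_neg fun hh => hc (by rw [hh])]
        rw [Finset.sum_congr rfl hcg, Finset.sum_ite_eq' _ (v, f v) fun _ => 1]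
        have hm : (v, f v) ∈ E.filter (fun e => e.1 = v) := Finset.mem_filter.2 ⟨(hf v).1, rfl⟩
        exact if_pos hm
      have hMin : ∀ w, ∑ e ∈ E with e.2 = w, M e = 1 := by
        intro w
        obtain ⟨v₀, hv₀⟩ := hbij.surjective w
        have hcg : ∀ e ∈ E.filter (fun e => e.2 = w), M e = if e = (v₀, w) then 1 else 0 := by
          intro e he
          obtain ⟨heE, h2⟩ := Finset.mem_filter.1 he
          simp only [hM]
          by_cases hc : e.2 = f e.1
          · have h1 : e.1 = v₀ := hbij.injective (by rw [← hc, h2, hv₀])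
            rw [if_pos hc, if_pos (Prod.ext h1 h2)]
          · rw [if_neg hc, if_neg fun hh => hc (by rw [hh]; exact hv₀.symm)]
        rw [Finset.sum_congr rfl hcg, Finset.sum_ite_eq' _ (v₀, w) fun _ => 1]
        have hm : (v₀, w) ∈ E.filter (fun e => e.2 = w) :=
          Finset.mem_filter.2 ⟨by rw [← hv₀]; exact (hf v₀).1, rfl⟩
        exact if_pos hm
      have hMmagic : IsMagicD E M 1 := ⟨hMnot, hMout, hMin⟩
      set L' : V × V → ℕ := fun e => L e - M e with hL'
      have hL'magic : IsMagicD E L' n := by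
        refine ⟨fun e he => ?_, fun v => ?_, fun v => ?_⟩
        · simp only [hL']
          rw [hL.1 e he, hMnot e he]
        · simp only [hL']
          rw [Finset.sum_tsub_distrib _ fun e _ => hMle e, hL.2.1 v, hMout v]
          omega
        · simp only [hL']
          rw [Finset.sum_tsub_distrib _ fun e _ => hMle e, hL.2.2 v, hMin v]
          omega
      obtain ⟨g, hg, hgsum⟩ := ih L' hL'magic
      refine ⟨Fin.cons M g, fun i => ?_, ?_⟩
      · refine Fin.cases ?_ ?_ i
        · simpa using hMmagic
        · intro j; simpa using hg j
      · rw [Fin.sum_cons, ← hgsum]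
        funext e
        have := hMle e
        simp only [Pi.add_apply, hL']
        omega
  refine ⟨fun L r h => main r L h, ?_⟩
  intro L hL
  obtain ⟨⟨r, hr⟩, hL0, hirr⟩ := hL
  rcases isEmpty_or_nonempty V with hemp | hne
  · exact absurd (funext fun e => hemp.elim e.1) hL0
  · match r, hr with
    | 0, hr => exact absurd (magic_zero E hr) hL0
    | 1, hr => exact hr
    | (n + 2), hr =>
      obtain ⟨g, hg, hsum⟩ := main (n + 2) L hr
      have h1 : IsMagicLabelingD E (g 0) := ⟨1, hg 0⟩
      have h2 : IsMagicLabelingD E (∑ i : Fin (n + 1), g i.succ) :=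
        ⟨n + 1, magic_sum E fun i => hg i.succ⟩
      have hne1 : g 0 ≠ 0 := magic_ne_zero E one_ne_zero (hg 0)
      have hne2 : (∑ i : Fin (n + 1), g i.succ) ≠ 0 :=
        magic_ne_zero E (Nat.succ_ne_zero n) (magic_sum E fun i => hg i.succ)
      exact absurd (hsum.trans (Fin.sum_univ_succ g)) (hirr _ _ h1 h2 hne1 hne2)
end
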